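/- arXiv:1211.5111 — 7 statements merged into one kernel-verified Lean document; each statement's English description precedes it below -/
import Mathlib

section
/- Let β : ℝ → ℝ be a bounded measurable 1-periodic function and set β_n(t) = β(nt) for n ∈ ℕ. Then β_n ⇀ ⟨β⟩, where ⟨β⟩ = ∫_0^1 β(t) dt; that is, for every compact interval I ⊂ ℝ and every continuous θ : I → ℝ, ∫_I β(nt)θ(t) dt → ⟨β⟩ ∫_I θ(t) dt as n → ∞. -/
open MeasureTheory Filter Set

lemma bdd_meas_intervalIntegrable {f : ℝ → ℝ} (hf : Measurable f) {M : ℝ}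
    (hM : ∀ t, |f t| ≤ M) (c d : ℝ) : IntervalIntegrable f volume c d := by
  refine (intervalIntegrable_const (c := M)).mono_fun'
    (hf.aestronglyMeasurable.restrict) ?_
  exact Filter.Eventually.of_forall fun x => by simpa [Real.norm_eq_abs] using hM x

lemma key_osc {β : ℝ → ℝ} (hβmeas : Measurable β) {M : ℝ} (hM : ∀ t, |β t| ≤ M)
    (hper : ∀ t : ℝ, β (t + 1) = β t) (n : ℕ) (hn : 0 < n) (c d : ℝ) :
    |∫ t in c..d, (β ((n : ℝ) * t) - ∫ s in (0:ℝ)..1, β s)| ≤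
      2 * (M + |∫ s in (0:ℝ)..1, β s|) / n := by
  set m : ℝ := ∫ s in (0:ℝ)..1, β s with hm
  set h : ℝ → ℝ := fun t => β t - m with hh
  set K : ℝ := M + |m| with hKdef
  have hK : ∀ t, |h t| ≤ K := fun t => by
    calc |β t - m| ≤ |β t| + |m| := abs_sub (β t) m
    _ ≤ M + |m| := by linarith [hM t]
  have hK0 : 0 ≤ K := le_trans (abs_nonneg _) (hK 0)
  have hhmeas : Measurable h := hβmeas.sub measurable_const
  have hhint : ∀ p q : ℝ, IntervalIntegrable h volume p q :=
    bdd_meas_intervalIntegrable hhmeas hK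
  have hhper : Function.Periodic h 1 := fun t => by simp [hh, hper t]
  have hh01 : (∫ s in (0:ℝ)..1, h s) = 0 := by
    rw [hh]
    rw [intervalIntegral.integral_sub (bdd_meas_intervalIntegrable hβmeas hM 0 1)
      intervalIntegrable_const]
    simp [hm]
  set H : ℝ → ℝ := fun x => ∫ u in (0:ℝ)..x, h u with hHdef
  have hHper : Function.Periodic H 1 := by
    intro x
    have h1 : H x + (∫ u in x..(x+1), h u) = H (x + 1) :=
      intervalIntegral.integral_add_adjacent_intervals (hhint 0 x) (hhint x (x+1))
    have h2 : (∫ u in x..(x+1), h u) = ∫ u in (0:ℝ)..(0+1:ℝ), h u :=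
      hhper.intervalIntegral_add_eq x 0
    rw [h2] at h1
    simp only [zero_add] at h1
    rw [hh01] at h1
    linarith
  have hHbd : ∀ x, |H x| ≤ K := by
    intro x
    have hfr : H (x - (⌊x⌋ : ℝ) * 1) = H x := hHper.sub_int_mul_eq ⌊x⌋
    have hfr' : x - (⌊x⌋ : ℝ) * 1 = Int.fract x := by rw [mul_one]; rfl
    rw [hfr'] at hfr
    rw [← hfr]
    have hb : ‖∫ u in (0:ℝ)..(Int.fract x), h u‖ ≤ K * |Int.fract x - 0| :=
      intervalIntegral.norm_integral_le_of_norm_le_const fun y _ => by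
        simpa [Real.norm_eq_abs] using hK y
    have hfr1 : |Int.fract x - 0| ≤ 1 := by
      rw [sub_zero, abs_of_nonneg (Int.fract_nonneg x)]
      exact (Int.fract_lt_one x).le
    calc |H (Int.fract x)| ≤ K * |Int.fract x - 0| := hb
    _ ≤ K * 1 := by nlinarith
    _ = K := mul_one K
  have hn' : ((n : ℝ)) ≠ 0 := Nat.cast_ne_zero.mpr hn.ne'
  have hsub : (∫ t in c..d, h ((n : ℝ) * t)) =
      ((n : ℝ))⁻¹ • ∫ x in ((n:ℝ)*c)..((n:ℝ)*d), h x :=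
    intervalIntegral.integral_comp_mul_left h hn'
  have hdiff : (∫ x in ((n:ℝ)*c)..((n:ℝ)*d), h x) = H ((n:ℝ)*d) - H ((n:ℝ)*c) := by
    rw [hHdef]
    exact (intervalIntegral.integral_interval_sub_left (hhint 0 ((n:ℝ)*d))
      (hhint 0 ((n:ℝ)*c))).symm
  have heq : (∫ t in c..d, (β ((n : ℝ) * t) - m)) =
      ((n:ℝ))⁻¹ * (H ((n:ℝ)*d) - H ((n:ℝ)*c)) := by
    rw [show (∫ t in c..d, (β ((n : ℝ) * t) - m)) = ∫ t in c..d, h ((n:ℝ)*t) from rfl]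
    rw [hsub, hdiff, smul_eq_mul]
  rw [heq]
  rw [abs_mul, abs_inv, abs_of_nonneg (Nat.cast_nonneg n)]
  rw [div_eq_mul_inv, mul_comm (2*K) _]
  have h2 : |H ((n:ℝ)*d) - H ((n:ℝ)*c)| ≤ 2 * K := by
    calc |H ((n:ℝ)*d) - H ((n:ℝ)*c)| ≤ |H ((n:ℝ)*d)| + |H ((n:ℝ)*c)| := abs_sub _ _
    _ ≤ 2*K := by linarith [hHbd ((n:ℝ)*d), hHbd ((n:ℝ)*c)]
  have hnpos : (0:ℝ) < (n:ℝ) := Nat.cast_pos.mpr hn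
  have hinv : (0:ℝ) ≤ ((n:ℝ))⁻¹ := by positivity
  nlinarith

/-- If `β : ℝ → ℝ` is a bounded measurable 1-periodic function and
`βₙ(t) = β(nt)`, then `βₙ ⇀ ⟨β⟩` where `⟨β⟩ = ∫_0^1 β`: for every compact interval
`[a,b]` and every continuous `θ` on `[a,b]`,
`∫_[a,b] β(nt) θ(t) dt → ⟨β⟩ ∫_[a,b] θ(t) dt`. -/
theorem stmt1 (β : ℝ → ℝ) (hβmeas : Measurable β)
    (hβbdd : ∃ M : ℝ, ∀ t, |β t| ≤ M)
    (hper : ∀ t : ℝ, β (t + 1) = β t)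
    (a b : ℝ) (θ : ℝ → ℝ) (hθ : ContinuousOn θ (Icc a b)) :
    Tendsto (fun n : ℕ => ∫ t in Icc a b, β (n * t) * θ t) atTop
      (nhds ((∫ t in (0:ℝ)..1, β t) * ∫ t in Icc a b, θ t)) := by
  obtain ⟨M, hM⟩ := hβbdd
  rcases lt_or_ge a b with hab | hab
  · -- main case a < b
    set m : ℝ := ∫ s in (0:ℝ)..1, β s with hm
    set h : ℝ → ℝ := fun t => β t - m with hh
    set K : ℝ := M + |m| with hKdef
    have hK : ∀ t, |h t| ≤ K := fun t => by
      calc |β t - m| ≤ |β t| + |m| := abs_sub (β t) m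
      _ ≤ M + |m| := by linarith [hM t]
    have hK0 : 0 ≤ K := le_trans (abs_nonneg _) (hK 0)
    obtain ⟨C, hC⟩ := isCompact_Icc.exists_bound_of_continuousOn hθ
    have hC0 : 0 ≤ C := le_trans (norm_nonneg _) (hC a (left_mem_Icc.mpr hab.le))
    have hIcc : ∀ f : ℝ → ℝ, (∫ t in Icc a b, f t) = ∫ t in a..b, f t := fun f => by
      rw [integral_Icc_eq_integral_Ioc, intervalIntegral.integral_of_le hab.le]
    simp only [hIcc]
    have ha : a ∈ Icc a b := left_mem_Icc.mpr hab.le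
    have hb : b ∈ Icc a b := right_mem_Icc.mpr hab.le
    have hsubIcc : ∀ {c d : ℝ}, c ∈ Icc a b → d ∈ Icc a b → uIcc c d ⊆ Icc a b := by
      intro c d hc hd
      rw [← uIcc_of_le hab.le]
      exact uIcc_subset_uIcc (by rwa [uIcc_of_le hab.le]) (by rwa [uIcc_of_le hab.le])
    have hθint : ∀ c d : ℝ, c ∈ Icc a b → d ∈ Icc a b → IntervalIntegrable θ volume c d :=
      fun c d hc hd => (hθ.mono (hsubIcc hc hd)).intervalIntegrable
    have hhnmeas : ∀ n : ℕ, Measurable fun t => h ((n:ℝ) * t) := fun n =>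
      (hβmeas.comp (measurable_const_mul _)).sub measurable_const
    have hhnint : ∀ (n : ℕ) (c d : ℝ), IntervalIntegrable (fun t => h ((n:ℝ)*t)) volume c d :=
      fun n c d => bdd_meas_intervalIntegrable (hhnmeas n) (fun t => hK _) c d
    have hprod : ∀ (n : ℕ) (c d : ℝ), c ∈ Icc a b → d ∈ Icc a b →
        IntervalIntegrable (fun t => h ((n:ℝ) * t) * θ t) volume c d := by
      intro n c d hc hd
      have hsub : Set.uIoc c d ⊆ Icc a b := Set.uIoc_subset_uIcc.trans (hsubIcc hc hd)
      refine (intervalIntegrable_const (c := K * C)).mono_fun' ?_ ?_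
      · have hθae : AEMeasurable θ (volume.restrict (Set.uIoc c d)) :=
          (hθ.aemeasurable measurableSet_Icc).mono_measure
            (Measure.restrict_mono hsub le_rfl)
        exact ((hhnmeas n).aemeasurable.mul hθae).aestronglyMeasurable
      · refine ae_restrict_of_forall_mem measurableSet_uIoc fun y hy => ?_
        have hym : y ∈ Icc a b := hsub hy
        show ‖h ((n:ℝ) * y) * θ y‖ ≤ K * C
        rw [Real.norm_eq_abs, abs_mul]
        have := hC y hym
        rw [Real.norm_eq_abs] at this
        exact mul_le_mul (hK _) this (abs_nonneg _) hK0
    set L : ℝ := m * ∫ t in a..b, θ t with hL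
    suffices hmain : ∀ ε > (0:ℝ), ∀ᶠ n : ℕ in atTop,
        |(∫ t in a..b, β ((n:ℝ) * t) * θ t) - L| ≤ ε by
      rw [Metric.tendsto_atTop]
      intro ε hε
      obtain ⟨n₀, hn₀⟩ := Filter.eventually_atTop.mp (hmain (ε/2) (by linarith))
      exact ⟨n₀, fun n hn => by
        rw [Real.dist_eq]; have := hn₀ n hn; linarith⟩
    intro ε hε
    have huc := isCompact_Icc.uniformContinuousOn_of_continuous hθ
    have hP0 : 0 ≤ K * (b - a) := mul_nonneg hK0 (by linarith)
    set ε₁ : ℝ := ε / (2 * (K * (b - a) + 1)) with hε₁def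
    have hε₁ : 0 < ε₁ := by
      apply div_pos hε; nlinarith
    obtain ⟨δ, hδ, hucδ⟩ := Metric.uniformContinuousOn_iff_le.mp huc ε₁ hε₁
    set N : ℕ := max 1 ⌈(b - a) / δ⌉₊ with hN
    have hN0 : 0 < N := lt_of_lt_of_le one_pos (le_max_left _ _)
    have hNr : (0:ℝ) < N := Nat.cast_pos.mpr hN0
    set Δ : ℝ := (b - a) / N with hΔ
    have hΔpos : 0 < Δ := div_pos (by linarith) hNr
    have hmesh : Δ ≤ δ := by
      rw [hΔ, div_le_iff₀ hNr]
      have h1 : (b - a)/δ ≤ (⌈(b-a)/δ⌉₊ : ℝ) := Nat.le_ceil _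
      have h2 : ((⌈(b-a)/δ⌉₊ : ℕ) : ℝ) ≤ (N : ℝ) := Nat.cast_le.mpr (le_max_right _ _)
      have h3 := (div_le_iff₀ hδ).mp (le_trans h1 h2)
      linarith [h3]
    set x : ℕ → ℝ := fun i => a + i * Δ with hx
    have hx0 : x 0 = a := by simp [hx]
    have hNΔ : (N:ℝ) * Δ = b - a := by
      rw [hΔ]; field_simp
    have hxN : x N = b := by
      simp only [hx]; rw [hNΔ]; ring
    have hxsucc : ∀ i : ℕ, x (i+1) = x i + Δ := fun i => by
      simp only [hx, Nat.cast_add, Nat.cast_one]; ring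
    have hxmem : ∀ i : ℕ, i ≤ N → x i ∈ Icc a b := by
      intro i hi
      have hiN : (i:ℝ) ≤ (N:ℝ) := Nat.cast_le.mpr hi
      have hi0 : (0:ℝ) ≤ (i:ℝ) := Nat.cast_nonneg i
      constructor
      · simp only [hx]; nlinarith
      · have : x i ≤ x N := by simp only [hx]; nlinarith
        rwa [hxN] at this
    have htend : Tendsto (fun n : ℕ => (N:ℝ) * C * (2 * K) / n) atTop (nhds 0) :=
      Tendsto.div_atTop tendsto_const_nhds tendsto_natCast_atTop_atTop
    have hev : ∀ᶠ n : ℕ in atTop, (N:ℝ) * C * (2*K) / n ≤ ε/2 :=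
      htend.eventually_le_const (by linarith)
    filter_upwards [hev, eventually_ge_atTop 1] with n hn1 hn2
    have hn : 0 < n := hn2
    -- rewrite the difference
    have hfeq : (fun t => β ((n:ℝ)*t) * θ t) = fun t => h ((n:ℝ)*t) * θ t + m * θ t := by
      funext t; simp only [hh]; ring
    have hβθint : IntervalIntegrable (fun t => β ((n:ℝ)*t) * θ t) volume a b := by
      rw [hfeq]
      exact (hprod n a b ha hb).add ((hθint a b ha hb).const_mul m)
    have hdiff : (∫ t in a..b, β ((n:ℝ)*t) * θ t) - L = ∫ t in a..b, h ((n:ℝ)*t) * θ t := by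
      rw [hL]
      have h1 : (∫ t in a..b, h ((n:ℝ)*t) * θ t) =
          (∫ t in a..b, β ((n:ℝ)*t) * θ t) - ∫ t in a..b, m * θ t := by
        rw [← intervalIntegral.integral_sub hβθint ((hθint a b ha hb).const_mul m)]
        congr 1; funext t; simp only [hh]; ring
      rw [h1, intervalIntegral.integral_const_mul]
    rw [hdiff]
    have hsum : (∫ t in a..b, h ((n:ℝ)*t) * θ t) =
        ∑ i ∈ Finset.range N, ∫ t in x i..x (i+1), h ((n:ℝ)*t) * θ t := by
      rw [intervalIntegral.sum_integral_adjacent_intervals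
        (fun k hk => hprod n (x k) (x (k+1)) (hxmem k hk.le) (hxmem (k+1) hk))]
      rw [hx0, hxN]
    rw [hsum]
    have hpiece : ∀ i ∈ Finset.range N,
        |∫ t in x i..x (i+1), h ((n:ℝ)*t) * θ t| ≤ K * ε₁ * Δ + C * (2*K/n) := by
      intro i hi'
      have hi : i < N := Finset.mem_range.mp hi'
      have hxi := hxmem i hi.le
      have hxi1 := hxmem (i+1) hi
      have hle : x i ≤ x (i+1) := by rw [hxsucc]; linarith
      have hint1 : IntervalIntegrable (fun t => h ((n:ℝ)*t) * (θ t - θ (x i)))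
          volume (x i) (x (i+1)) := by
        have : (fun t => h ((n:ℝ)*t) * (θ t - θ (x i))) =
            fun t => h ((n:ℝ)*t) * θ t - h ((n:ℝ)*t) * θ (x i) := by
          funext t; ring
        rw [this]
        exact (hprod n _ _ hxi hxi1).sub ((hhnint n _ _).mul_const _)
      have hsplit : (∫ t in x i..x (i+1), h ((n:ℝ)*t) * θ t) =
          (∫ t in x i..x (i+1), h ((n:ℝ)*t) * (θ t - θ (x i))) +
            θ (x i) * ∫ t in x i..x (i+1), h ((n:ℝ)*t) := by
        rw [← intervalIntegral.integral_const_mul,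
          ← intervalIntegral.integral_add hint1 ((hhnint n _ _).const_mul _)]
        congr 1; funext t; ring
      rw [hsplit]
      have hb1 : |∫ t in x i..x (i+1), h ((n:ℝ)*t) * (θ t - θ (x i))| ≤ K * ε₁ * Δ := by
        have hbound := intervalIntegral.norm_integral_le_of_norm_le_const
          (C := K * ε₁) (a := x i) (b := x (i+1))
          (f := fun t => h ((n:ℝ)*t) * (θ t - θ (x i))) ?_
        · rw [Real.norm_eq_abs] at hbound
          have habs : |x (i+1) - x i| = Δ := by
            rw [hxsucc]; simp [abs_of_pos hΔpos]
          rw [habs] at hbound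
          linarith [hbound]
        · intro y hy
          rw [uIoc_of_le hle] at hy
          have hyIcc : y ∈ Icc (x i) (x (i+1)) := ⟨hy.1.le, hy.2⟩
          have hym : y ∈ Icc a b := ⟨le_trans hxi.1 hy.1.le, le_trans hy.2 hxi1.2⟩
          have hdist : dist y (x i) ≤ δ := by
            rw [Real.dist_eq, abs_of_nonneg (by linarith [hy.1.le] : (0:ℝ) ≤ y - x i)]
            have : x (i+1) = x i + Δ := hxsucc i
            have := hy.2
            rw [hxsucc] at this
            linarith
          have hθd := hucδ y hym (x i) hxi hdist
          rw [Real.dist_eq] at hθd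
          rw [Real.norm_eq_abs, abs_mul]
          exact mul_le_mul (hK _) hθd (abs_nonneg _) hK0
      have hb2 : |θ (x i) * ∫ t in x i..x (i+1), h ((n:ℝ)*t)| ≤ C * (2*K/n) := by
        rw [abs_mul]
        have hkey := key_osc hβmeas hM hper n hn (x i) (x (i+1))
        rw [← hm] at hkey
        rw [show (∫ t in x i..x (i+1), (β ((n : ℝ) * t) - m)) =
          ∫ t in x i..x (i+1), h ((n:ℝ)*t) from rfl] at hkey
        rw [← hKdef] at hkey
        have hθxi := hC (x i) hxi
        rw [Real.norm_eq_abs] at hθxi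
        have h2Kn : (0:ℝ) ≤ 2*K/n := by positivity
        exact mul_le_mul hθxi hkey (abs_nonneg _) hC0
      calc |(∫ t in x i..x (i+1), h ((n:ℝ)*t) * (θ t - θ (x i))) +
            θ (x i) * ∫ t in x i..x (i+1), h ((n:ℝ)*t)|
          ≤ |∫ t in x i..x (i+1), h ((n:ℝ)*t) * (θ t - θ (x i))| +
            |θ (x i) * ∫ t in x i..x (i+1), h ((n:ℝ)*t)| := abs_add_le _ _
        _ ≤ K * ε₁ * Δ + C * (2*K/n) := add_le_add hb1 hb2
    have htotal : |∑ i ∈ Finset.range N, ∫ t in x i..x (i+1), h ((n:ℝ)*t) * θ t| ≤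
        (N:ℝ) * (K * ε₁ * Δ + C * (2*K/n)) := by
      calc |∑ i ∈ Finset.range N, ∫ t in x i..x (i+1), h ((n:ℝ)*t) * θ t|
          ≤ ∑ i ∈ Finset.range N, |∫ t in x i..x (i+1), h ((n:ℝ)*t) * θ t| :=
            Finset.abs_sum_le_sum_abs _ _
        _ ≤ ∑ _i ∈ Finset.range N, (K * ε₁ * Δ + C * (2*K/n)) :=
            Finset.sum_le_sum hpiece
        _ = (N:ℝ) * (K * ε₁ * Δ + C * (2*K/n)) := by
            rw [Finset.sum_const, Finset.card_range, nsmul_eq_mul]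
    have hexpand : (N:ℝ) * (K * ε₁ * Δ + C * (2*K/n)) =
        K * ε₁ * (b - a) + (N:ℝ) * C * (2*K) / n := by
      have : (N:ℝ) * (K * ε₁ * Δ) = K * ε₁ * ((N:ℝ) * Δ) := by ring
      field_simp
      rw [← hNΔ]; ring
    have hhalf1 : K * ε₁ * (b - a) ≤ ε / 2 := by
      have hden : (0:ℝ) < K * (b - a) + 1 := by linarith
      have he : K * ε₁ * (b - a) + ε₁ = ε / 2 := by
        rw [hε₁def]; field_simp
      linarith [hε₁.le]
    calc |∑ i ∈ Finset.range N, ∫ t in x i..x (i+1), h ((n:ℝ)*t) * θ t|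
        ≤ (N:ℝ) * (K * ε₁ * Δ + C * (2*K/n)) := htotal
      _ = K * ε₁ * (b - a) + (N:ℝ) * C * (2*K) / n := hexpand
      _ ≤ ε/2 + ε/2 := add_le_add hhalf1 hn1
      _ = ε := by ring
  · -- degenerate case b ≤ a
    have h0 : (volume.restrict (Icc a b)) = 0 := by
      rw [Measure.restrict_eq_zero, Real.volume_Icc]
      simp [sub_nonpos.mpr hab]
    simp only [h0, integral_zero_measure, mul_zero]
    exact tendsto_const_nhds
end

section
/- Let Φ be a strongly continuous one-parameter unitary group on a complex Hilbert space H, and let (α_n) be a sequence of locally integrable real-valued functions on ℝ with α_n ⇀ 1. Define τ_n(t,t') = ∫_{t'}^{t} α_n(s) ds and the propagators Φ^n(t,t') = Φ(τ_n(t,t')). Then for every u ∈ H and every t, t' ∈ ℝ, Φ^n(t,t')u converges to Φ(t−t')u in H as n → ∞. Moreover, if in addition there is a locally integrable ᾱ with |α_n(t)| ≤ ᾱ(t) for a.e. t and all n, then for every u ∈ H and every bounded interval I the convergence is uniform in (t,t') ∈ I × I, i.e. sup_{t,t'∈I} ‖Φ^n(t,t')u − Φ(t−t')u‖ → 0. 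-/
open MeasureTheory Filter Set

private lemma locInt_intervalIntegrable {f : ℝ → ℝ} (hf : LocallyIntegrable f volume)
    (s t : ℝ) : IntervalIntegrable f volume s t := by
  rw [intervalIntegrable_iff]
  exact (hf.integrableOn_isCompact isCompact_uIcc).mono_set uIoc_subset_uIcc

private lemma tau_tendsto (αs : ℕ → ℝ → ℝ)
    (hweak : ∀ a b : ℝ, ∀ θ : ℝ → ℝ, ContinuousOn θ (Icc a b) →
      Tendsto (fun n => ∫ t in Icc a b, αs n t * θ t) atTop
        (nhds (∫ t in Icc a b, θ t))) (t t' : ℝ) :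
    Tendsto (fun n => ∫ s in t'..t, αs n s) atTop (nhds (t - t')) := by
  have key : ∀ c d : ℝ, c ≤ d →
      Tendsto (fun n => ∫ s in Icc c d, αs n s) atTop (nhds (d - c)) := by
    intro c d hcd
    have h := hweak c d (fun _ => (1:ℝ)) continuousOn_const
    simp only [mul_one] at h
    have h1 : (∫ _ in Icc c d, (1:ℝ)) = d - c := by
      simp [Real.volume_Icc, ENNReal.toReal_ofReal (sub_nonneg.2 hcd), hcd]
    rwa [h1] at h
  rcases le_total t' t with h | h
  · have h2 := key t' t h
    have heq : ∀ n, (∫ s in t'..t, αs n s) = ∫ s in Icc t' t, αs n s := fun n => by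
      rw [intervalIntegral.integral_of_le h, ← integral_Icc_eq_integral_Ioc]
    simp only [heq]
    exact h2
  · have h2 := (key t t' h).neg
    have heq : ∀ n, (∫ s in t'..t, αs n s) = -∫ s in Icc t t', αs n s := fun n => by
      rw [intervalIntegral.integral_symm, intervalIntegral.integral_of_le h,
        ← integral_Icc_eq_integral_Ioc]
    simp only [heq]
    simpa using h2

/-- Let `Φ` be a strongly continuous one-parameter unitary group on a
complex Hilbert space `H` and let `αs n ⇀ 1` weakly. With `τₙ(t,t') = ∫_{t'}^t αs n`,
the propagators `Φ(τₙ(t,t'))u` converge to `Φ(t-t')u` for every `u, t, t'`; moreover, if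
`|αs n| ≤ ᾱ` a.e. with `ᾱ` locally integrable, the convergence is uniform on `I × I`
for every bounded interval `I = [a,b]`. -/
theorem stmt2 {H : Type*} [NormedAddCommGroup H] [InnerProductSpace ℂ H] [CompleteSpace H]
    (Φ : ℝ → H →L[ℂ] H)
    (hΦ0 : Φ 0 = ContinuousLinearMap.id ℂ H)
    (hgrp : ∀ s t : ℝ, Φ (s + t) = (Φ s).comp (Φ t))
    (hiso : ∀ (t : ℝ) (u : H), ‖Φ t u‖ = ‖u‖)
    (hcont : ∀ u : H, Continuous fun t => Φ t u)
    (αs : ℕ → ℝ → ℝ)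
    (hαs : ∀ n, LocallyIntegrable (αs n) volume)
    (hweak : ∀ a b : ℝ, ∀ θ : ℝ → ℝ, ContinuousOn θ (Icc a b) →
      Tendsto (fun n => ∫ t in Icc a b, αs n t * θ t) atTop
        (nhds (∫ t in Icc a b, θ t))) :
    (∀ (u : H) (t t' : ℝ),
      Tendsto (fun n => Φ (∫ s in t'..t, αs n s) u) atTop (nhds (Φ (t - t') u)))
    ∧
    (∀ αbar : ℝ → ℝ, LocallyIntegrable αbar volume →
      (∀ n, ∀ᵐ t ∂volume, |αs n t| ≤ αbar t) →
      ∀ (u : H) (a b : ℝ),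
        TendstoUniformlyOn
          (fun n (p : ℝ × ℝ) => Φ (∫ s in p.2..p.1, αs n s) u)
          (fun p => Φ (p.1 - p.2) u) atTop (Icc a b ×ˢ Icc a b)) := by
  -- difference formula for the group
  have hdiff : ∀ (u : H) (x y : ℝ), ‖Φ x u - Φ y u‖ = ‖Φ (x - y) u - u‖ := by
    intro u x y
    have h1 : Φ x u = Φ y (Φ (x - y) u) := by
      have := hgrp y (x - y)
      rw [add_sub_cancel] at this
      rw [this]; rfl
    rw [h1, ← map_sub, hiso]
  constructor
  · intro u t t'
    exact ((hcont u).tendsto _).comp (tau_tendsto αs hweak t t')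
  · intro αbar hαbar hdom u a b
    -- interval integrability
    have intn : ∀ n s t, IntervalIntegrable (αs n) volume s t :=
      fun n => locInt_intervalIntegrable (hαs n)
    have intbar : ∀ s t, IntervalIntegrable αbar volume s t :=
      locInt_intervalIntegrable hαbar
    -- h n x = ∫_a^x αs n - (x - a)
    set h : ℕ → ℝ → ℝ := fun n x => (∫ s in a..x, αs n s) - (x - a) with hh
    -- W modulus
    set W : ℝ → ℝ := fun x => (∫ s in a..x, αbar s) + x with hW
    have hWcont : Continuous W :=
      (intervalIntegral.continuous_primitive (fun s t => intbar s t) a).add continuous_id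
    have hmod : ∀ n s t, s ≤ t → |h n t - h n s| ≤ W t - W s := by
      intro n s t hst
      have e1 : h n t - h n s = (∫ x in s..t, αs n x) - (t - s) := by
        have := intervalIntegral.integral_add_adjacent_intervals (intn n a s) (intn n s t)
        simp only [hh]; rw [← this]; ring
      have e2 : W t - W s = (∫ x in s..t, αbar x) + (t - s) := by
        have := intervalIntegral.integral_add_adjacent_intervals (intbar a s) (intbar s t)
        simp only [hW]; rw [← this]; ring
      rw [e1, e2]
      have b1 : |∫ x in s..t, αs n x| ≤ ∫ x in s..t, αbar x := by
        calc |∫ x in s..t, αs n x| ≤ ∫ x in s..t, |αs n x| :=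
              intervalIntegral.abs_integral_le_integral_abs hst
          _ ≤ ∫ x in s..t, αbar x :=
              intervalIntegral.integral_mono_ae hst ((intn n s t).abs) (intbar s t) (hdom n)
      have b2 := abs_sub (∫ x in s..t, αs n x) (t - s)
      have b3 : |t - s| = t - s := abs_of_nonneg (sub_nonneg.2 hst)
      linarith [b1, b2]
    have hmod' : ∀ n s t, |h n t - h n s| ≤ |W t - W s| := by
      intro n s t
      rcases le_total s t with hst | hst
      · exact (hmod n s t hst).trans (le_abs_self _)
      · rw [abs_sub_comm, abs_sub_comm (W t)]
        exact (hmod n t s hst).trans (le_abs_self _)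
    -- pointwise convergence of h n x to 0
    have hpt : ∀ x : ℝ, Tendsto (fun n => h n x) atTop (nhds 0) := by
      intro x
      have := (tau_tendsto αs hweak x a).sub_const (x - a)
      simpa [hh] using this
    -- uniform smallness of h on Icc a b
    have hunif : ∀ ε > (0:ℝ), ∀ᶠ n in atTop, ∀ x ∈ Icc a b, |h n x| < ε := by
      intro ε hε
      -- open cover by sets where W varies little
      set U : ℝ → Set ℝ := fun x => {y | |W y - W x| < ε / 2} with hU
      have hUopen : ∀ x, IsOpen (U x) := by
        intro x
        have : Continuous fun y => |W y - W x| := ((hWcont.sub continuous_const).abs)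
        exact isOpen_lt this continuous_const
      have hcover : Icc a b ⊆ ⋃ x, U x := by
        intro x _
        exact mem_iUnion.2 ⟨x, by simp [hU]; positivity⟩
      obtain ⟨F, hF⟩ := isCompact_Icc.elim_finite_subcover U hUopen hcover
      have hev : ∀ᶠ n in atTop, ∀ x ∈ F, |h n x| < ε / 2 := by
        apply (Filter.eventually_all_finset F).2
        intro x _
        have := (hpt x)
        rw [Metric.tendsto_atTop] at this
        obtain ⟨N, hN⟩ := this (ε / 2) (by positivity)
        exact Filter.eventually_atTop.2 ⟨N, fun n hn => by
          have := hN n hn; simpa [Real.dist_eq] using this⟩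
      filter_upwards [hev] with n hn x hx
      obtain ⟨x₀, hx₀F, hx₀⟩ := by
        have := hF hx
        simpa [mem_iUnion] using this
      calc |h n x| ≤ |h n x - h n x₀| + |h n x₀| := by
            have := abs_sub_abs_le_abs_sub (h n x) (h n x₀)
            have := abs_add_le (h n x - h n x₀) (h n x₀)
            calc |h n x| = |(h n x - h n x₀) + h n x₀| := by ring_nf
              _ ≤ |h n x - h n x₀| + |h n x₀| := abs_add_le _ _
        _ < ε / 2 + ε / 2 := by
            have h1 := (hmod' n x₀ x).trans_lt hx₀
            exact add_lt_add h1 (hn x₀ hx₀F)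
        _ = ε := by ring
    -- conclude
    rw [Metric.tendstoUniformlyOn_iff]
    intro ε hε
    -- choose δ from continuity of r ↦ ‖Φ r u - u‖ at 0
    have hψ : Tendsto (fun r : ℝ => ‖Φ r u - u‖) (nhds 0) (nhds 0) := by
      have hc : Continuous fun r : ℝ => ‖Φ r u - u‖ :=
        ((hcont u).sub continuous_const).norm
      have h0 : ‖Φ (0:ℝ) u - u‖ = 0 := by simp [hΦ0]
      simpa [h0] using hc.tendsto 0
    rw [Metric.tendsto_nhds_nhds] at hψ
    obtain ⟨δ, hδpos, hδ⟩ := hψ ε hε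
    filter_upwards [hunif (δ / 2) (by positivity)] with n hn p hp
    obtain ⟨hp1, hp2⟩ := hp
    have hτ : (∫ s in p.2..p.1, αs n s) - (p.1 - p.2) = h n p.1 - h n p.2 := by
      have := intervalIntegral.integral_add_adjacent_intervals (intn n p.2 a) (intn n a p.1)
      simp only [hh]
      rw [← this, intervalIntegral.integral_symm a p.2]
      ring
    have hsmall : |(∫ s in p.2..p.1, αs n s) - (p.1 - p.2)| < δ := by
      rw [hτ]
      calc |h n p.1 - h n p.2| ≤ |h n p.1| + |h n p.2| := abs_sub _ _
        _ < δ / 2 + δ / 2 := add_lt_add (hn _ hp1) (hn _ hp2)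
        _ = δ := by ring
    have hsmall' : |(p.1 - p.2) - ∫ s in p.2..p.1, αs n s| < δ := by
      rw [abs_sub_comm]; exact hsmall
    have := hδ (x := (p.1 - p.2) - ∫ s in p.2..p.1, αs n s)
      (by simpa [Real.dist_eq] using hsmall')
    rw [dist_eq_norm, hdiff u]
    simpa [Real.dist_eq, dist_eq_norm] using this
end

section
/- Let (β_n) be a sequence of locally integrable real-valued functions on ℝ with β_n ⇀ 0 and |β_n(t)| ≤ β̄(t) for a.e. t and all n, where β̄ is locally integrable. Let H be a Hilbert space and v ∈ C([0,T], H). Define V_n(t) = ∫_0^t β_n(t') v(t') dt' (Bochner integral). Then each V_n belongs to C([0,T], H) and lim_{n→∞} max_{t ∈ [0,T]} ‖V_n(t)‖ = 0. -/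
open MeasureTheory Filter Set

lemma stmt4_scalar {T : ℝ} (hT : 0 < T)
    (βs : ℕ → ℝ → ℝ) (βbar : ℝ → ℝ)
    (hβs : ∀ n, LocallyIntegrable (βs n) volume)
    (hβbar : LocallyIntegrable βbar volume)
    (hweak : ∀ a b : ℝ, ∀ θ : ℝ → ℝ, ContinuousOn θ (Icc a b) →
      Tendsto (fun n => ∫ t in Icc a b, βs n t * θ t) atTop (nhds 0))
    (hdom : ∀ n, ∀ᵐ t ∂volume, |βs n t| ≤ βbar t)
    {ε : ℝ} (hε : 0 < ε) :
    ∀ᶠ n in atTop, ∀ s ∈ Icc (0:ℝ) T, |∫ t in (0:ℝ)..s, βs n t| < ε := by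
  have hβsII : ∀ n x y, IntervalIntegrable (βs n) volume x y := fun n x y =>
    ((hβs n).integrableOn_isCompact isCompact_uIcc).intervalIntegrable
  have hbarII : ∀ x y : ℝ, IntervalIntegrable βbar volume x y := fun x y =>
    (hβbar.integrableOn_isCompact isCompact_uIcc).intervalIntegrable
  set B : ℝ → ℝ := fun s => ∫ t in (0:ℝ)..s, βbar t with hBdef
  have hB : Continuous B := intervalIntegral.continuous_primitive (fun a b => hbarII a b) 0
  set F : ℕ → ℝ → ℝ := fun n s => ∫ t in (0:ℝ)..s, βs n t with hFdef
  -- pointwise convergence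
  have hFpt : ∀ s ∈ Icc (0:ℝ) T, Tendsto (fun n => F n s) atTop (nhds 0) := by
    intro s hs
    have : ∀ n, F n s = ∫ t in Icc (0:ℝ) s, βs n t * 1 := by
      intro n
      simp only [mul_one, F]
      rw [intervalIntegral.integral_of_le hs.1, ← integral_Icc_eq_integral_Ioc]
    simp only [this]
    exact hweak 0 s (fun _ => 1) continuousOn_const
  -- equicontinuity
  have hequi : ∀ n, ∀ x y : ℝ, x ≤ y → |F n y - F n x| ≤ B y - B x := by
    intro n x y hxy
    have h1 : F n y - F n x = ∫ t in x..y, βs n t :=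
      intervalIntegral.integral_interval_sub_left (hβsII n 0 y) (hβsII n 0 x)
    have h2 : B y - B x = ∫ t in x..y, βbar t :=
      intervalIntegral.integral_interval_sub_left (hbarII 0 y) (hbarII 0 x)
    rw [h1, h2]
    calc |∫ t in x..y, βs n t| ≤ ∫ t in x..y, |βs n t| := by
          simpa using intervalIntegral.norm_integral_le_integral_norm (f := βs n) (μ := volume) hxy
      _ ≤ ∫ t in x..y, βbar t :=
          intervalIntegral.integral_mono_ae hxy ((hβsII n x y).abs) (hbarII x y) (hdom n)
  -- compact cover argument
  set U : ℝ → Set ℝ := fun s => {x | |B x - B s| < ε / 2} with hUdef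
  have hUopen : ∀ s, IsOpen (U s) := by
    intro s
    have : U s = (fun x => |B x - B s|) ⁻¹' Iio (ε / 2) := rfl
    rw [this]
    exact IsOpen.preimage (by continuity) isOpen_Iio
  obtain ⟨J, hJmem, hJcov⟩ := isCompact_Icc.elim_nhds_subcover U
    (fun x _ => (hUopen x).mem_nhds (by simpa [U] using half_pos hε))
  have hev : ∀ᶠ n in atTop, ∀ j ∈ J, |F n j| < ε / 2 := by
    rw [eventually_all_finset]
    intro j hj
    have := (hFpt j (hJmem j hj)) (Metric.ball_mem_nhds 0 (half_pos hε))
    filter_upwards [this] with n hn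
    simpa [Real.dist_eq] using hn
  filter_upwards [hev] with n hn s hs
  obtain ⟨j, hjJ, hsU⟩ := by simpa using hJcov hs
  have h1 : |F n s - F n j| ≤ |B s - B j| := by
    rcases le_total s j with h | h
    · rw [abs_sub_comm, abs_sub_comm (B s)]
      exact (hequi n s j h).trans (le_abs_self _)
    · exact (hequi n j s h).trans (le_abs_self _)
  calc |F n s| ≤ |F n s - F n j| + |F n j| := by
        simpa using abs_add_le (F n s - F n j) (F n j)
    _ < ε / 2 + ε / 2 := by
        have := hn j hjJ
        have h2 : |B s - B j| < ε / 2 := hsU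
        exact add_lt_add_of_le_of_lt (h1.trans h2.le) this
    _ = ε := by ring

/-- If `βs n ⇀ 0` weakly with `|βs n| ≤ β̄` a.e. for a locally integrable
`β̄`, and `v ∈ C([0,T], H)`, then `Vₙ(t) = ∫_0^t βs n (t') v(t') dt'` belongs to
`C([0,T], H)` and `max_{t ∈ [0,T]} ‖Vₙ(t)‖ → 0`. -/
theorem stmt4 {H : Type*} [NormedAddCommGroup H] [InnerProductSpace ℂ H] [CompleteSpace H]
    {T : ℝ} (hT : 0 < T)
    (βs : ℕ → ℝ → ℝ) (βbar : ℝ → ℝ)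
    (hβs : ∀ n, LocallyIntegrable (βs n) volume)
    (hβbar : LocallyIntegrable βbar volume)
    (hweak : ∀ a b : ℝ, ∀ θ : ℝ → ℝ, ContinuousOn θ (Icc a b) →
      Tendsto (fun n => ∫ t in Icc a b, βs n t * θ t) atTop (nhds 0))
    (hdom : ∀ n, ∀ᵐ t ∂volume, |βs n t| ≤ βbar t)
    (v : ℝ → H) (hv : ContinuousOn v (Icc 0 T)) :
    (∀ n, ContinuousOn (fun t => ∫ t' in (0:ℝ)..t, βs n t' • v t') (Icc 0 T)) ∧
    TendstoUniformlyOn (fun n t => ∫ t' in (0:ℝ)..t, βs n t' • v t')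
      (fun _ => (0 : H)) atTop (Icc 0 T) := by
  have hT' : (0:ℝ) ≤ T := hT.le
  have hIcc : uIcc (0:ℝ) T = Icc 0 T := uIcc_of_le hT'
  have hvmeas : AEStronglyMeasurable v (volume.restrict (Icc (0:ℝ) T)) :=
    hv.aestronglyMeasurable measurableSet_Icc
  obtain ⟨M0, hM0⟩ := isCompact_Icc.exists_bound_of_continuousOn hv
  set M : ℝ := max M0 1 with hMdef
  have hM1 : (1:ℝ) ≤ M := le_max_right _ _
  have hMpos : 0 < M := lt_of_lt_of_le one_pos hM1
  have hM : ∀ t ∈ Icc (0:ℝ) T, ‖v t‖ ≤ M := fun t ht => (hM0 t ht).trans (le_max_left _ _)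
  have hβsI : ∀ n, IntegrableOn (βs n) (Icc (0:ℝ) T) volume := fun n =>
    (hβs n).integrableOn_isCompact isCompact_Icc
  have hβsII : ∀ n (x y : ℝ), IntervalIntegrable (βs n) volume x y := fun n x y =>
    ((hβs n).integrableOn_isCompact isCompact_uIcc).intervalIntegrable
  have hbarII : ∀ x y : ℝ, IntervalIntegrable βbar volume x y := fun x y =>
    (hβbar.integrableOn_isCompact isCompact_uIcc).intervalIntegrable
  have hbar_nn : ∀ᵐ t ∂volume, 0 ≤ βbar t :=
    (hdom 0).mono fun t h => (abs_nonneg _).trans h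
  have hbar_int_nn : ∀ x y : ℝ, x ≤ y → 0 ≤ ∫ t' in x..y, βbar t' := fun x y hxy =>
    intervalIntegral.integral_nonneg_of_ae hxy hbar_nn
  -- integrability of the integrand
  have hgI : ∀ n, IntegrableOn (fun t => βs n t • v t) (Icc (0:ℝ) T) volume := by
    intro n
    apply Integrable.mono' ((hβsI n).norm.const_mul M)
    · exact ((hβsI n).aestronglyMeasurable).smul hvmeas
    · filter_upwards [ae_restrict_mem measurableSet_Icc] with t ht
      rw [norm_smul]
      calc ‖βs n t‖ * ‖v t‖ ≤ ‖βs n t‖ * M :=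
            mul_le_mul_of_nonneg_left (hM t ht) (norm_nonneg _)
        _ = M * ‖βs n t‖ := mul_comm _ _
  have hgII : ∀ n {x y : ℝ}, x ∈ Icc (0:ℝ) T → y ∈ Icc (0:ℝ) T →
      IntervalIntegrable (fun t => βs n t • v t) volume x y := by
    intro n x y hx hy
    apply IntegrableOn.intervalIntegrable
    apply (hgI n).mono_set
    rw [← hIcc]
    exact uIcc_subset_uIcc (hIcc ▸ hx) (hIcc ▸ hy)
  constructor
  · intro n
    have := intervalIntegral.continuousOn_primitive_interval (μ := volume) (a := 0) (b := T)
      (f := fun t => βs n t • v t) (by rw [hIcc]; exact hgI n)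
    rwa [hIcc] at this
  · rw [Metric.tendstoUniformlyOn_iff]
    intro ε hε
    set C : ℝ := (∫ t' in (0:ℝ)..T, βbar t') + 1 with hCdef
    have hBT_nn : 0 ≤ ∫ t' in (0:ℝ)..T, βbar t' := hbar_int_nn 0 T hT'
    have hC1 : 1 ≤ C := le_add_of_nonneg_left hBT_nn
    have hCpos : 0 < C := lt_of_lt_of_le one_pos hC1
    set ε₁ : ℝ := ε / (2 * C) with hε₁def
    have hε₁pos : 0 < ε₁ := div_pos hε (by positivity)
    -- uniform continuity of v
    have huc := isCompact_Icc.uniformContinuousOn_of_continuous hv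
    rw [Metric.uniformContinuousOn_iff] at huc
    obtain ⟨δ, hδpos, hδ⟩ := huc ε₁ hε₁pos
    obtain ⟨N0, hN0⟩ := exists_nat_gt (T / δ)
    set N : ℕ := N0 + 1 with hNdef
    have hNpos : 0 < (N:ℝ) := by positivity
    have hTN : T / N < δ := by
      rw [div_lt_iff₀ hNpos]
      have h1 : T < δ * N0 := by
        have := (div_lt_iff₀ hδpos).1 hN0
        linarith
      have h2 : δ * (N0:ℝ) ≤ δ * N := by
        apply mul_le_mul_of_nonneg_left _ hδpos.le
        push_cast [hNdef]; linarith
      linarith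
    set ε₂ : ℝ := ε / (8 * N * M) with hε₂def
    have hε₂pos : 0 < ε₂ := div_pos hε (by positivity)
    filter_upwards [stmt4_scalar hT βs βbar hβs hβbar hweak hdom hε₂pos] with n hn t ht
    rw [dist_eq_norm, zero_sub, norm_neg]
    -- the partition
    set a : ℕ → ℝ := fun i => ((i : ℝ) * T / N) ⊓ t with hadef
    have ha0 : a 0 = 0 := by
      simp only [a, Nat.cast_zero, zero_mul, zero_div]
      exact min_eq_left ht.1
    have haN : a N = t := by
      have hNT : (N:ℝ) * T / N = T := by field_simp
      simp only [a, hNT]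
      exact min_eq_right ht.2
    have hmono : ∀ i, a i ≤ a (i + 1) := by
      intro i
      apply min_le_min _ le_rfl
      have h2 : ((i + 1 : ℕ):ℝ) = (i:ℝ) + 1 := by push_cast; ring
      rw [h2]
      have h1 : (i:ℝ) * T ≤ ((i:ℝ) + 1) * T := by nlinarith
      exact (div_le_div_iff_of_pos_right hNpos).2 h1
    have hmem : ∀ i, a i ∈ Icc (0:ℝ) T := fun i =>
      ⟨le_min (by positivity) ht.1, (min_le_right _ _).trans ht.2⟩
    have hstep : ∀ i, a (i + 1) - a i ≤ T / N := by
      intro i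
      have hc : (0:ℝ) ≤ T / N := by positivity
      rcases le_total ((i:ℝ) * T / N) t with h | h
      · have h1 : a i = (i:ℝ) * T / N := min_eq_left h
        have h2 : a (i + 1) ≤ ((i:ℝ) + 1) * T / N := by
          simp only [a]; push_cast; exact min_le_left _ _
        have h3 : ((i:ℝ) + 1) * T / N = (i:ℝ) * T / N + T / N := by ring
        linarith
      · have h1 : a i = t := min_eq_right h
        have h2 : a (i + 1) ≤ t := min_le_right _ _
        linarith
    have hsum := intervalIntegral.sum_integral_adjacent_intervals
      (f := fun t' => βs n t' • v t') (μ := volume) (a := a) (n := N)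
      (fun k _ => hgII n (hmem k) (hmem (k + 1)))
    rw [ha0, haN] at hsum
    rw [← hsum]
    -- bound each piece
    have key : ∀ i ∈ Finset.range N,
        ‖∫ t' in a i..a (i + 1), βs n t' • v t'‖ ≤
          (∫ t' in a i..a (i + 1), βbar t') * ε₁ + 2 * ε₂ * M := by
      intro i _
      have hii := hmono i
      have h1mem := hmem i
      have h2mem := hmem (i + 1)
      have e1 : (fun t' => βs n t' • (v t' - v (a i)))
          = fun t' => βs n t' • v t' - βs n t' • v (a i) := by
        funext t'; rw [smul_sub]
      have hI2 : IntervalIntegrable (fun t' => βs n t' • v (a i)) volume (a i) (a (i + 1)) :=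
        ⟨(hβsII n (a i) (a (i+1))).1.smul_const _, (hβsII n (a i) (a (i+1))).2.smul_const _⟩
      have hsplit : (∫ t' in a i..a (i + 1), βs n t' • v t')
          = (∫ t' in a i..a (i + 1), βs n t' • (v t' - v (a i)))
            + (∫ t' in a i..a (i + 1), βs n t') • v (a i) := by
        rw [e1, intervalIntegral.integral_sub (hgII n h1mem h2mem) hI2,
          ← intervalIntegral.integral_smul_const, sub_add_cancel]
      rw [hsplit]
      refine (norm_add_le _ _).trans (add_le_add ?_ ?_)
      · -- first piece
        have hae : ∀ᵐ t' ∂volume.restrict (uIoc (a i) (a (i + 1))),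
            ‖βs n t' • (v t' - v (a i))‖ ≤ βbar t' * ε₁ := by
          rw [uIoc_of_le hii]
          filter_upwards [ae_restrict_mem measurableSet_Ioc, ae_restrict_of_ae (hdom n)]
            with t' ht' hd
          have ht'I : t' ∈ Icc (0:ℝ) T := ⟨h1mem.1.trans ht'.1.le, ht'.2.trans h2mem.2⟩
          have hdist : dist t' (a i) < δ := by
            rw [Real.dist_eq, abs_of_nonneg (by linarith [ht'.1.le] : (0:ℝ) ≤ t' - a i)]
            have := hstep i
            have := ht'.2
            linarith
          have hvv : ‖v t' - v (a i)‖ ≤ ε₁ := by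
            have := hδ t' ht'I (a i) h1mem hdist
            rw [dist_eq_norm] at this
            exact this.le
          rw [norm_smul]
          exact mul_le_mul (by simpa using hd) hvv (norm_nonneg _) ((abs_nonneg _).trans hd)
        have hb := intervalIntegral.norm_integral_le_abs_of_norm_le hae ((hbarII _ _).mul_const ε₁)
        rw [intervalIntegral.integral_mul_const] at hb
        rwa [abs_of_nonneg (mul_nonneg (hbar_int_nn _ _ hii) hε₁pos.le)] at hb
      · -- second piece
        rw [norm_smul]
        have hFsub : (∫ t' in a i..a (i + 1), βs n t')
            = (∫ t' in (0:ℝ)..a (i + 1), βs n t') - ∫ t' in (0:ℝ)..a i, βs n t' :=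
          (intervalIntegral.integral_interval_sub_left (hβsII n 0 (a (i + 1)))
            (hβsII n 0 (a i))).symm
        have h1 := hn (a i) h1mem
        have h2 := hn (a (i + 1)) h2mem
        have habs : ‖∫ t' in a i..a (i + 1), βs n t'‖ ≤ 2 * ε₂ := by
          rw [Real.norm_eq_abs, hFsub]
          calc |(∫ t' in (0:ℝ)..a (i + 1), βs n t') - ∫ t' in (0:ℝ)..a i, βs n t'|
              ≤ |∫ t' in (0:ℝ)..a (i + 1), βs n t'| + |∫ t' in (0:ℝ)..a i, βs n t'| :=
                abs_sub _ _
            _ ≤ 2 * ε₂ := by linarith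
        calc ‖∫ t' in a i..a (i + 1), βs n t'‖ * ‖v (a i)‖
            ≤ (2 * ε₂) * M := mul_le_mul habs (hM _ h1mem) (norm_nonneg _) (by positivity)
          _ = 2 * ε₂ * M := rfl
    calc ‖∑ i ∈ Finset.range N, ∫ t' in a i..a (i + 1), βs n t' • v t'‖
        ≤ ∑ i ∈ Finset.range N, ((∫ t' in a i..a (i + 1), βbar t') * ε₁ + 2 * ε₂ * M) :=
          norm_sum_le_of_le _ key
      _ = (∑ i ∈ Finset.range N, ∫ t' in a i..a (i + 1), βbar t') * ε₁ + N * (2 * ε₂ * M) := by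
          rw [Finset.sum_add_distrib, ← Finset.sum_mul, Finset.sum_const, Finset.card_range,
            nsmul_eq_mul]
      _ = (∫ t' in (0:ℝ)..t, βbar t') * ε₁ + N * (2 * ε₂ * M) := by
          rw [intervalIntegral.sum_integral_adjacent_intervals (fun k _ => hbarII (a k) (a (k+1))),
            ha0, haN]
      _ ≤ (C - 1) * ε₁ + N * (2 * ε₂ * M) := by
          have hsub : (∫ t' in (0:ℝ)..T, βbar t') - (∫ t' in (0:ℝ)..t, βbar t')
              = ∫ t' in t..T, βbar t' :=
            intervalIntegral.integral_interval_sub_left (hbarII 0 T) (hbarII 0 t)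
          have h2 := hbar_int_nn t T ht.2
          have hle : (∫ t' in (0:ℝ)..t, βbar t') ≤ C - 1 := by
            simp only [hCdef]; linarith
          exact add_le_add_left (mul_le_mul_of_nonneg_right hle hε₁pos.le) _
      _ < ε := by
          have hCne : C ≠ 0 := hCpos.ne'
          have hNne : (N:ℝ) ≠ 0 := hNpos.ne'
          have hMne : M ≠ 0 := hMpos.ne'
          have e1 : C * ε₁ = ε / 2 := by
            rw [hε₁def]; field_simp
          have e2 : (N:ℝ) * (2 * ε₂ * M) = ε / 4 := by
            rw [hε₂def]; field_simp; ring
          have h3 : (C - 1) * ε₁ ≤ C * ε₁ :=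
            mul_le_mul_of_nonneg_right (by linarith) hε₁pos.le
          nlinarith [h3, e1, e2, hε]
end

section
/- Let Φ be a strongly continuous one-parameter unitary group on a complex Hilbert space H, let I be a compact interval, let v ∈ C(I, H), and let (α_n) be a sequence of locally integrable real-valued functions on ℝ with α_n ⇀ 1 and |α_n(t)| ≤ ᾱ(t) for a.e. t and all n, where ᾱ is locally integrable. Define τ_n(t,t') = ∫_{t'}^{t} α_n(s) ds. Then Φ(τ_n(t,t'))v(t') converges to Φ(t−t')v(t') uniformly for (t,t') ∈ I × I, i.e. sup_{t,t'∈I} ‖Φ(τ_n(t,t'))v(t') − Φ(t−t')v(t')‖ → 0 as n → ∞. -/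
open MeasureTheory Filter Set

/-- Joint smallness of `‖Φ s u - u‖` for small `s` and `u` in a compact set. -/
lemma phi_delta {H : Type*} [NormedAddCommGroup H] [InnerProductSpace ℂ H]
    (Φ : ℝ → H →L[ℂ] H)
    (hΦ0 : Φ 0 = ContinuousLinearMap.id ℂ H)
    (hiso : ∀ (t : ℝ) (u : H), ‖Φ t u‖ = ‖u‖)
    (hcont : ∀ u : H, Continuous fun t => Φ t u)
    {K : Set H} (hK : IsCompact K) {ε : ℝ} (hε : 0 < ε) :
    ∃ δ > 0, ∀ s : ℝ, |s| < δ → ∀ u ∈ K, ‖Φ s u - u‖ < ε := by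
  have hjoint : Continuous fun p : ℝ × H => Φ p.1 p.2 := by
    rw [continuous_iff_continuousAt]
    rintro ⟨s₀, u₀⟩
    rw [ContinuousAt, tendsto_iff_norm_sub_tendsto_zero]
    have hbd : Tendsto (fun p : ℝ × H => ‖p.2 - u₀‖ + ‖Φ p.1 u₀ - Φ s₀ u₀‖)
        (nhds (s₀, u₀)) (nhds 0) := by
      have h1 : Tendsto (fun p : ℝ × H => ‖p.2 - u₀‖) (nhds (s₀, u₀)) (nhds 0) := by
        have := ((continuous_snd.sub (continuous_const (y := u₀))).norm :
          Continuous fun p : ℝ × H => ‖p.2 - u₀‖)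
        have := this.tendsto (s₀, u₀)
        simpa using this
      have h2 : Tendsto (fun p : ℝ × H => ‖Φ p.1 u₀ - Φ s₀ u₀‖) (nhds (s₀, u₀)) (nhds 0) := by
        have hc : Continuous fun p : ℝ × H => ‖Φ p.1 u₀ - Φ s₀ u₀‖ :=
          (((hcont u₀).comp continuous_fst).sub continuous_const).norm
        have := hc.tendsto (s₀, u₀)
        simpa using this
      simpa using h1.add h2
    refine squeeze_zero (fun p => norm_nonneg _) (fun p => ?_) hbd
    calc ‖Φ p.1 p.2 - Φ s₀ u₀‖ ≤ ‖Φ p.1 p.2 - Φ p.1 u₀‖ + ‖Φ p.1 u₀ - Φ s₀ u₀‖ :=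
          norm_sub_le_norm_sub_add_norm_sub _ _ _
      _ = ‖p.2 - u₀‖ + ‖Φ p.1 u₀ - Φ s₀ u₀‖ := by rw [← map_sub, hiso]
  have hN : Continuous fun p : ℝ × H => ‖Φ p.1 p.2 - p.2‖ :=
    (hjoint.sub continuous_snd).norm
  have hopen : IsOpen ((fun p : ℝ × H => ‖Φ p.1 p.2 - p.2‖) ⁻¹' Iio ε) :=
    hN.isOpen_preimage _ isOpen_Iio
  have hsub : ({(0 : ℝ)} : Set ℝ) ×ˢ K ⊆ (fun p : ℝ × H => ‖Φ p.1 p.2 - p.2‖) ⁻¹' Iio ε := by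
    rintro ⟨s, u⟩ ⟨hs, hu⟩
    simp only [mem_singleton_iff] at hs
    subst hs
    simp [hΦ0, hε]
  obtain ⟨U, W, hUo, hWo, hU0, hKW, hUW⟩ :=
    generalized_tube_lemma isCompact_singleton hK hopen hsub
  obtain ⟨δ, hδ0, hball⟩ := Metric.isOpen_iff.mp hUo 0 (hU0 rfl)
  refine ⟨δ, hδ0, fun s hs u hu => ?_⟩
  have hsU : s ∈ U := hball (by simpa [Real.dist_eq] using hs)
  have : (s, u) ∈ (fun p : ℝ × H => ‖Φ p.1 p.2 - p.2‖) ⁻¹' Iio ε :=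
    hUW ⟨hsU, hKW hu⟩
  exact this

/-- Uniform convergence of the primitives `t ↦ ∫ s in a..t, αs n s` to `t ↦ t - a` on `[a,b]`. -/
lemma unif_prim (a b : ℝ) (αs : ℕ → ℝ → ℝ)
    (hαs : ∀ n, LocallyIntegrable (αs n) volume)
    (hweak : ∀ c d : ℝ, ∀ θ : ℝ → ℝ, ContinuousOn θ (Icc c d) →
      Tendsto (fun n => ∫ t in Icc c d, αs n t * θ t) atTop
        (nhds (∫ t in Icc c d, θ t)))
    (αbar : ℝ → ℝ) (hαbar : LocallyIntegrable αbar volume)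
    (hdom : ∀ n, ∀ᵐ t ∂volume, |αs n t| ≤ αbar t) {ε : ℝ} (hε : 0 < ε) :
    ∀ᶠ n in atTop, ∀ t ∈ Icc a b, |(∫ s in a..t, αs n s) - (t - a)| < ε := by
  have hint : ∀ n c d, IntervalIntegrable (αs n) volume c d :=
    fun n c d => ((hαs n).integrableOn_isCompact isCompact_uIcc).intervalIntegrable
  set β : ℝ → ℝ := fun s => αbar s + 1 with hβdef
  have hβ : LocallyIntegrable β volume := hαbar.add (locallyIntegrable_const 1)
  have hβint : ∀ c d, IntervalIntegrable β volume c d :=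
    fun c d => (hβ.integrableOn_isCompact isCompact_uIcc).intervalIntegrable
  have hβ1 : ∀ᵐ s ∂volume, (1 : ℝ) ≤ β s := by
    filter_upwards [hdom 0] with s hs
    have : (0 : ℝ) ≤ αbar s := le_trans (abs_nonneg _) hs
    simp only [hβdef]; linarith
  set B : ℝ → ℝ := fun t => ∫ s in a..t, β s with hBdef
  have hBcont : Continuous B := intervalIntegral.continuous_primitive hβint a
  -- increment bounds for c ≤ d
  have hinc : ∀ n c d, c ≤ d →
      |∫ s in c..d, αs n s| ≤ B d - B c ∧ d - c ≤ B d - B c := by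
    intro n c d hcd
    have hBd : B d - B c = ∫ s in c..d, β s :=
      intervalIntegral.integral_interval_sub_left (hβint a d) (hβint a c)
    constructor
    · calc |∫ s in c..d, αs n s| ≤ ∫ s in c..d, |αs n s| :=
            intervalIntegral.abs_integral_le_integral_abs hcd
        _ ≤ ∫ s in c..d, β s := by
            refine intervalIntegral.integral_mono_ae hcd (hint n c d).abs (hβint c d) ?_
            filter_upwards [hdom n] with s hs
            simp only [hβdef]; linarith
        _ = B d - B c := hBd.symm
    · calc d - c = ∫ s in c..d, (1 : ℝ) := by simp
        _ ≤ ∫ s in c..d, β s :=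
            intervalIntegral.integral_mono_ae hcd intervalIntegrable_const (hβint c d) hβ1
        _ = B d - B c := hBd.symm
  -- increment bounds, any order
  have hinc' : ∀ n c d,
      |∫ s in c..d, αs n s| ≤ |B d - B c| ∧ |d - c| ≤ |B d - B c| := by
    intro n c d
    rcases le_total c d with h | h
    · obtain ⟨h1, h2⟩ := hinc n c d h
      refine ⟨le_trans h1 (le_abs_self _), ?_⟩
      rw [abs_of_nonneg (by linarith : (0:ℝ) ≤ d - c)]
      exact le_trans h2 (le_abs_self _)
    · obtain ⟨h1, h2⟩ := hinc n d c h
      constructor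
      · calc |∫ s in c..d, αs n s| = |∫ s in d..c, αs n s| := by
              rw [intervalIntegral.integral_symm d c, abs_neg]
          _ ≤ B c - B d := h1
          _ ≤ |B c - B d| := le_abs_self _
          _ = |B d - B c| := abs_sub_comm _ _
      · rw [abs_sub_comm d c, abs_sub_comm (B d) (B c),
          abs_of_nonneg (by linarith : (0:ℝ) ≤ c - d)]
        exact le_trans h2 (le_abs_self _)
  -- pointwise convergence
  have hpt : ∀ t ∈ Icc a b, Tendsto (fun n => ∫ s in a..t, αs n s) atTop (nhds (t - a)) := by
    intro t ht
    have hat : a ≤ t := ht.1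
    have h1 : ∀ n, (∫ s in a..t, αs n s) = ∫ s in Icc a t, αs n s := by
      intro n
      rw [intervalIntegral.integral_of_le hat, ← integral_Icc_eq_integral_Ioc]
    have h2 : (∫ s in Icc a t, (1 : ℝ)) = t - a := by
      rw [setIntegral_const, measureReal_def, Real.volume_Icc, smul_eq_mul, mul_one,
        ENNReal.toReal_ofReal (by linarith)]
    have := hweak a t (fun _ => (1 : ℝ)) continuousOn_const
    simp only [mul_one] at this
    rw [h2] at this
    simpa only [h1] using this
  -- uniform continuity of B on [a,b]
  have hBu : UniformContinuousOn B (Icc a b) :=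
    isCompact_Icc.uniformContinuousOn_of_continuous hBcont.continuousOn
  obtain ⟨δ, hδ0, hδ⟩ := (Metric.uniformContinuousOn_iff.mp hBu) (ε / 3) (by linarith)
  -- finite cover of [a,b] by δ-balls centered in [a,b]
  have hcover : Icc a b ⊆ ⋃ i ∈ Icc a b, Metric.ball i δ := by
    intro x hx
    exact mem_biUnion hx (Metric.mem_ball_self hδ0)
  obtain ⟨F, hFsub, hFfin, hFcov⟩ :=
    isCompact_Icc.elim_finite_subcover_image (fun i _ => Metric.isOpen_ball) hcover
  -- eventually all grid points are good
  have hev : ∀ᶠ n in atTop, ∀ i ∈ F, |(∫ s in a..i, αs n s) - (i - a)| < ε / 3 := by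
    rw [hFfin.eventually_all]
    intro i hi
    have := (hpt i (hFsub hi)).sub_const (i - a)
    rw [sub_self] at this
    have habs := this.abs
    rw [abs_zero] at habs
    exact habs (Iio_mem_nhds (by linarith : (0:ℝ) < ε / 3))
  filter_upwards [hev] with n hn t ht
  obtain ⟨i, hi, hti⟩ := mem_iUnion₂.mp (hFcov ht)
  have hiI : i ∈ Icc a b := hFsub hi
  have hdist : dist t i < δ := Metric.mem_ball.mp hti
  have hBsmall : |B t - B i| < ε / 3 := by
    have := hδ t ht i hiI hdist
    simpa [Real.dist_eq] using this
  have hdiff : (∫ s in a..t, αs n s) - (∫ s in a..i, αs n s) = ∫ s in i..t, αs n s :=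
    intervalIntegral.integral_interval_sub_left (hint n a t) (hint n a i)
  obtain ⟨hI1, hI2⟩ := hinc' n i t
  have h1 : |(∫ s in a..t, αs n s) - (∫ s in a..i, αs n s)| < ε / 3 := by
    rw [hdiff]; exact lt_of_le_of_lt hI1 hBsmall
  have h2 : |t - i| < ε / 3 := lt_of_le_of_lt hI2 hBsmall
  have h3 : |(∫ s in a..i, αs n s) - (i - a)| < ε / 3 := hn i hi
  calc |(∫ s in a..t, αs n s) - (t - a)|
      = |((∫ s in a..t, αs n s) - (∫ s in a..i, αs n s))
          + ((∫ s in a..i, αs n s) - (i - a)) + ((i - a) - (t - a))| := by ring_nf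
    _ ≤ |(∫ s in a..t, αs n s) - (∫ s in a..i, αs n s)|
          + |(∫ s in a..i, αs n s) - (i - a)| + |(i - a) - (t - a)| := abs_add_three _ _ _
    _ < ε / 3 + ε / 3 + ε / 3 := by
        refine add_lt_add (add_lt_add h1 h3) ?_
        have : (i - a) - (t - a) = -(t - i) := by ring
        rw [this, abs_neg]; exact h2
    _ = ε := by ring

/-- Let `Φ` be a strongly continuous one-parameter unitary group on a
complex Hilbert space `H`, `I = [a,b]` a compact interval, `v ∈ C(I, H)`, and `αs n ⇀ 1`
weakly with `|αs n| ≤ ᾱ` a.e. for a locally integrable `ᾱ`. With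
`τₙ(t,t') = ∫_{t'}^t αs n`, the maps `(t,t') ↦ Φ(τₙ(t,t')) v(t')` converge uniformly on
`I × I` to `(t,t') ↦ Φ(t - t') v(t')`. -/
theorem stmt5 {H : Type*} [NormedAddCommGroup H] [InnerProductSpace ℂ H] [CompleteSpace H]
    (Φ : ℝ → H →L[ℂ] H)
    (hΦ0 : Φ 0 = ContinuousLinearMap.id ℂ H)
    (hgrp : ∀ s t : ℝ, Φ (s + t) = (Φ s).comp (Φ t))
    (hiso : ∀ (t : ℝ) (u : H), ‖Φ t u‖ = ‖u‖)
    (hcont : ∀ u : H, Continuous fun t => Φ t u)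
    (a b : ℝ) (v : ℝ → H) (hv : ContinuousOn v (Icc a b))
    (αs : ℕ → ℝ → ℝ)
    (hαs : ∀ n, LocallyIntegrable (αs n) volume)
    (hweak : ∀ c d : ℝ, ∀ θ : ℝ → ℝ, ContinuousOn θ (Icc c d) →
      Tendsto (fun n => ∫ t in Icc c d, αs n t * θ t) atTop
        (nhds (∫ t in Icc c d, θ t)))
    (αbar : ℝ → ℝ) (hαbar : LocallyIntegrable αbar volume)
    (hdom : ∀ n, ∀ᵐ t ∂volume, |αs n t| ≤ αbar t) :
    TendstoUniformlyOn
      (fun n (p : ℝ × ℝ) => Φ (∫ s in p.2..p.1, αs n s) (v p.2))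
      (fun p => Φ (p.1 - p.2) (v p.2)) atTop (Icc a b ×ˢ Icc a b) := by
  have hint : ∀ n c d, IntervalIntegrable (αs n) volume c d :=
    fun n c d => ((hαs n).integrableOn_isCompact isCompact_uIcc).intervalIntegrable
  have hK : IsCompact (v '' Icc a b) := isCompact_Icc.image_of_continuousOn hv
  rw [Metric.tendstoUniformlyOn_iff]
  intro ε hε
  obtain ⟨δ, hδ0, hδ⟩ := phi_delta Φ hΦ0 hiso hcont hK hε
  have hev := unif_prim a b αs hαs hweak αbar hαbar hdom (half_pos hδ0)
  filter_upwards [hev] with n hn p hp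
  obtain ⟨hp1, hp2⟩ := hp
  set τ : ℝ := ∫ s in p.2..p.1, αs n s with hτ
  have hτeq : τ = (∫ s in a..p.1, αs n s) - (∫ s in a..p.2, αs n s) :=
    (intervalIntegral.integral_interval_sub_left (hint n a p.1) (hint n a p.2)).symm
  have hsmall : |τ - (p.1 - p.2)| < δ := by
    have h1 := hn p.1 hp1
    have h2 := hn p.2 hp2
    have : τ - (p.1 - p.2) =
        ((∫ s in a..p.1, αs n s) - (p.1 - a)) - ((∫ s in a..p.2, αs n s) - (p.2 - a)) := by
      rw [hτeq]; ring
    rw [this]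
    calc |((∫ s in a..p.1, αs n s) - (p.1 - a)) - ((∫ s in a..p.2, αs n s) - (p.2 - a))|
        ≤ |(∫ s in a..p.1, αs n s) - (p.1 - a)| + |(∫ s in a..p.2, αs n s) - (p.2 - a)| :=
          abs_sub _ _
      _ < δ / 2 + δ / 2 := add_lt_add h1 h2
      _ = δ := by ring
  set s₀ : ℝ := τ - (p.1 - p.2) with hs₀
  have hcomp : Φ τ (v p.2) = Φ (p.1 - p.2) (Φ s₀ (v p.2)) := by
    have : τ = (p.1 - p.2) + s₀ := by rw [hs₀]; ring
    rw [this, hgrp]; rfl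
  rw [dist_eq_norm, hcomp, ← map_sub, hiso]
  rw [norm_sub_rev]
  exact hδ s₀ hsmall (v p.2) (mem_image_of_mem v hp2)
end

section
/- Let H be a Hilbert space, β : ℝ → ℝ a bounded measurable 1-periodic function, n ∈ ℕ with n ≥ 1, h_n = 1/n, and β_n(t) = β(nt). Let v : [0, h_n] → H satisfy v(t) = v(0) + ∫_0^t v_t(t') dt' for a Bochner-integrable function v_t with ‖v_t(t')‖ ≤ M for a.e. t' ∈ [0, h_n]. If ∫_0^1 β(t) dt = 0 or v(0) = 0, then ‖∫_0^{h_n} β_n(t) v(t) dt‖ ≤ (1/2) ‖β‖_{L^∞} M h_n². -/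
open MeasureTheory Filter Set

/-- Let `β` be bounded (essentially by `Mβ`), measurable and 1-periodic,
`n ≥ 1`, `hₙ = 1/n`, `βₙ(t) = β(nt)`. If `v(t) = v(0) + ∫_0^t v_t` on `[0, hₙ]` with
`‖v_t‖ ≤ M` a.e. there, and either `∫_0^1 β = 0` or `v(0) = 0`, then
`‖∫_0^{hₙ} βₙ(t) v(t) dt‖ ≤ (1/2) Mβ M hₙ²`. -/
theorem stmt6 {H : Type*} [NormedAddCommGroup H] [InnerProductSpace ℂ H] [CompleteSpace H]
    (β : ℝ → ℝ) (hβmeas : Measurable β) (Mβ : ℝ)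
    (hβbdd : ∀ᵐ t ∂volume, |β t| ≤ Mβ)
    (hper : ∀ t : ℝ, β (t + 1) = β t)
    (n : ℕ) (hn : 1 ≤ n)
    (v vt : ℝ → H) (M : ℝ)
    (hvt : IntervalIntegrable vt volume 0 (1 / (n:ℝ)))
    (hv : ∀ t ∈ Icc (0:ℝ) (1 / (n:ℝ)), v t = v 0 + ∫ s in (0:ℝ)..t, vt s)
    (hM : ∀ᵐ t ∂(volume.restrict (Icc (0:ℝ) (1 / (n:ℝ)))), ‖vt t‖ ≤ M)
    (hzero : (∫ t in (0:ℝ)..1, β t) = 0 ∨ v 0 = 0) :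
    ‖∫ t in (0:ℝ)..(1 / (n:ℝ)), β (n * t) • v t‖ ≤
      (1 / 2) * Mβ * M * (1 / (n:ℝ)) ^ 2 := by
  have npos : (0:ℝ) < n := by exact_mod_cast hn
  have nne : (n:ℝ) ≠ 0 := ne_of_gt npos
  set h : ℝ := 1 / (n:ℝ) with hh
  have hpos : 0 < h := by positivity
  have hMβ : 0 ≤ Mβ := by
    obtain ⟨t, ht⟩ := hβbdd.exists
    exact le_trans (abs_nonneg _) ht
  have hMnn : 0 ≤ M := by
    haveI : (ae (volume.restrict (Icc (0:ℝ) h))).NeBot := by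
      rw [ae_neBot, Ne, Measure.restrict_eq_zero, Real.volume_Icc]
      simp [ENNReal.ofReal_eq_zero, hpos.not_ge]
    obtain ⟨t, ht⟩ := hM.exists
    exact le_trans (norm_nonneg _) ht
  set w : ℝ → H := fun t => ∫ s in (0:ℝ)..t, vt s with hw
  have hwbd : ∀ t ∈ Icc (0:ℝ) h, ‖w t‖ ≤ M * t := by
    intro t ht
    have hsub : uIoc (0:ℝ) t ⊆ Icc (0:ℝ) h := by
      rw [uIoc_of_le ht.1]
      exact (Ioc_subset_Icc_self).trans (Icc_subset_Icc le_rfl ht.2)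
    have h1 : ∀ᵐ s ∂volume.restrict (uIoc (0:ℝ) t), ‖vt s‖ ≤ M :=
      ae_restrict_of_ae_restrict_of_subset hsub hM
    calc ‖w t‖ ≤ |∫ s in (0:ℝ)..t, M| :=
          intervalIntegral.norm_integral_le_abs_of_norm_le h1 intervalIntegrable_const
      _ = M * t := by
          rw [intervalIntegral.integral_const, sub_zero, smul_eq_mul,
            abs_of_nonneg (mul_nonneg ht.1 hMnn)]
          ring
  have hβn : ∀ᵐ t ∂(volume : Measure ℝ), |β ((n:ℝ) * t)| ≤ Mβ := by
    rw [ae_iff] at hβbdd ⊢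
    have heq : {t : ℝ | ¬ |β ((n:ℝ)*t)| ≤ Mβ} = (fun t => (n:ℝ)*t) ⁻¹' {t | ¬ |β t| ≤ Mβ} := rfl
    rw [heq, Real.volume_preimage_mul_left nne, hβbdd, mul_zero]
  have hwcont : ContinuousOn w (Icc (0:ℝ) h) := by
    have := intervalIntegral.continuousOn_primitive_interval' hvt
      (left_mem_uIcc (a := (0:ℝ)) (b := h))
    rwa [uIcc_of_le hpos.le] at this
  have hwsm : AEStronglyMeasurable w (volume.restrict (Ioc (0:ℝ) h)) :=
    (hwcont.mono Ioc_subset_Icc_self).aestronglyMeasurable measurableSet_Ioc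
  have hβnsm : AEStronglyMeasurable (fun t => β ((n:ℝ) * t))
      (volume.restrict (Ioc (0:ℝ) h)) :=
    (hβmeas.comp (measurable_const_mul _)).aestronglyMeasurable
  have hg_int : IntervalIntegrable (fun t => β ((n:ℝ)*t) • w t) volume 0 h := by
    rw [intervalIntegrable_iff_integrableOn_Ioc_of_le hpos.le]
    apply Integrable.mono' (g := fun _ => Mβ * (M * h)) (integrable_const _)
      (hβnsm.smul hwsm)
    filter_upwards [ae_restrict_mem measurableSet_Ioc, ae_restrict_of_ae hβn] with t ht hβt
    rw [Pi.smul_apply', norm_smul, Real.norm_eq_abs]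
    have hwt := hwbd t (Ioc_subset_Icc_self ht)
    calc |β ((n:ℝ)*t)| * ‖w t‖ ≤ Mβ * (M * t) :=
          mul_le_mul hβt hwt (norm_nonneg _) hMβ
      _ ≤ Mβ * (M * h) := mul_le_mul_of_nonneg_left (mul_le_mul_of_nonneg_left ht.2 hMnn) hMβ
  have h1_int : IntervalIntegrable (fun t => β ((n:ℝ)*t) • v 0) volume 0 h := by
    rw [intervalIntegrable_iff_integrableOn_Ioc_of_le hpos.le]
    apply Integrable.mono' (g := fun _ => Mβ * ‖v 0‖) (integrable_const _)
      (hβnsm.smul aestronglyMeasurable_const)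
    filter_upwards [ae_restrict_of_ae hβn] with t hβt
    rw [Pi.smul_apply', norm_smul, Real.norm_eq_abs]
    exact mul_le_mul_of_nonneg_right hβt (norm_nonneg _)
  have hsplit : (∫ t in (0:ℝ)..h, β ((n:ℝ) * t) • v t) =
      (∫ t in (0:ℝ)..h, β ((n:ℝ)*t) • v 0) + ∫ t in (0:ℝ)..h, β ((n:ℝ)*t) • w t := by
    rw [← intervalIntegral.integral_add h1_int hg_int]
    apply intervalIntegral.integral_congr
    intro t ht
    rw [uIcc_of_le hpos.le] at ht
    simp only [hv t ht, smul_add, hw]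
  have hfirst : (∫ t in (0:ℝ)..h, β ((n:ℝ)*t) • v 0) = 0 := by
    rcases hzero with h0 | h0
    · have hint : (∫ t in (0:ℝ)..h, β ((n:ℝ)*t)) = 0 := by
        rw [intervalIntegral.integral_comp_mul_left β nne, mul_zero,
          (show (n:ℝ) * h = 1 by rw [hh]; field_simp), h0, smul_zero]
      rw [intervalIntegral.integral_smul_const, hint, zero_smul]
    · simp [h0]
  have hsecond : ‖∫ t in (0:ℝ)..h, β ((n:ℝ)*t) • w t‖ ≤ (1/2) * Mβ * M * h^2 := by
    have hb : IntervalIntegrable (fun t => Mβ * (M * t)) volume 0 h :=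
      ((continuous_const.mul (continuous_const.mul continuous_id)).intervalIntegrable 0 h)
    have hae : ∀ᵐ t ∂volume.restrict (uIoc (0:ℝ) h),
        ‖β ((n:ℝ)*t) • w t‖ ≤ Mβ * (M * t) := by
      rw [uIoc_of_le hpos.le]
      filter_upwards [ae_restrict_mem measurableSet_Ioc, ae_restrict_of_ae hβn] with t ht hβt
      rw [norm_smul, Real.norm_eq_abs]
      exact mul_le_mul hβt (hwbd t (Ioc_subset_Icc_self ht)) (norm_nonneg _) hMβ
    calc ‖∫ t in (0:ℝ)..h, β ((n:ℝ)*t) • w t‖ ≤ |∫ t in (0:ℝ)..h, Mβ * (M * t)| :=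
          intervalIntegral.norm_integral_le_abs_of_norm_le hae hb
      _ = (1/2) * Mβ * M * h^2 := by
          rw [intervalIntegral.integral_const_mul, intervalIntegral.integral_const_mul,
            integral_id]
          rw [abs_of_nonneg (by nlinarith [mul_nonneg (mul_nonneg hMβ hMnn) (sq_nonneg h)] :
            (0:ℝ) ≤ Mβ * (M * ((h ^ 2 - 0 ^ 2) / 2)))]
          ring
  calc ‖∫ t in (0:ℝ)..h, β ((n:ℝ) * t) • v t‖
      = ‖∫ t in (0:ℝ)..h, β ((n:ℝ)*t) • w t‖ := by rw [hsplit, hfirst, zero_add]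
    _ ≤ (1/2) * Mβ * M * h^2 := hsecond
end

section
/- Let H be a complex Hilbert space, Φ^A a strongly continuous one-parameter unitary group on H, and B : H → H a map with B(0) = 0 that is Lipschitz on bounded sets (for every R > 0 there is L > 0 with ‖B(u) − B(v)‖ ≤ L‖u − v‖ whenever ‖u‖, ‖v‖ ≤ R). Then for every u_0 ∈ H there exist T > 0 and a unique u ∈ C([0,T], H) satisfying the integral equation u(t) = Φ^A(t)u_0 − i ∫_0^t Φ^A(t−t') B(u(t')) dt' for all t ∈ [0,T]. -/
open MeasureTheory Filter Set

set_option maxHeartbeats 4000000 in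
/-- Local well-posedness: if `Φ` is a strongly continuous one-parameter
unitary group on a complex Hilbert space `H` and `B : H → H` is Lipschitz on bounded sets
with `B 0 = 0`, then for every `u₀ ∈ H` there are `T > 0` and a unique
`u ∈ C([0,T], H)` with `u(t) = Φ(t)u₀ - i ∫_0^t Φ(t-t') B(u(t')) dt'` on `[0,T]`. -/
theorem stmt7 {H : Type*} [NormedAddCommGroup H] [InnerProductSpace ℂ H] [CompleteSpace H]
    (Φ : ℝ → H →L[ℂ] H)
    (hΦ0 : Φ 0 = ContinuousLinearMap.id ℂ H)
    (hgrp : ∀ s t : ℝ, Φ (s + t) = (Φ s).comp (Φ t))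
    (hiso : ∀ (t : ℝ) (u : H), ‖Φ t u‖ = ‖u‖)
    (hcont : ∀ u : H, Continuous fun t => Φ t u)
    (B : H → H) (hB0 : B 0 = 0)
    (hB : ∀ R > (0:ℝ), ∃ L > (0:ℝ), ∀ u v : H, ‖u‖ ≤ R → ‖v‖ ≤ R →
      ‖B u - B v‖ ≤ L * ‖u - v‖)
    (u₀ : H) :
    ∃ T > (0:ℝ), ∃ u : ℝ → H,
      (ContinuousOn u (Icc 0 T) ∧
        ∀ t ∈ Icc (0:ℝ) T,
          u t = Φ t u₀ - Complex.I • ∫ s in (0:ℝ)..t, Φ (t - s) (B (u s))) ∧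
      ∀ v : ℝ → H,
        (ContinuousOn v (Icc 0 T) ∧
          ∀ t ∈ Icc (0:ℝ) T,
            v t = Φ t u₀ - Complex.I • ∫ s in (0:ℝ)..t, Φ (t - s) (B (v s))) →
        EqOn u v (Icc 0 T) := by
  -- continuity of B
  have hBcont : Continuous B := by
    rw [continuous_iff_continuousAt]
    intro x
    obtain ⟨L, hLpos, hLip⟩ := hB (‖x‖ + 1) (by positivity)
    rw [Metric.continuousAt_iff]
    intro ε hε
    refine ⟨min 1 (ε / (L + 1)), by positivity, fun {y} hy => ?_⟩
    rw [lt_min_iff] at hy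
    rw [dist_eq_norm] at *
    have h1 : ‖y‖ ≤ ‖x‖ + 1 := by
      have := norm_sub_norm_le y x
      linarith [hy.1]
    have h2 := hLip y x h1 (by linarith)
    have : L * ‖y - x‖ < ε := by
      have h3 : (L + 1) * ‖y - x‖ < (L + 1) * (ε / (L + 1)) :=
        mul_lt_mul_of_pos_left hy.2 (by linarith)
      rw [mul_div_cancel₀] at h3 <;> nlinarith [norm_nonneg (y - x)]
    linarith
  -- joint continuity of (t, u) ↦ Φ t u
  have hjoint : Continuous fun p : ℝ × H => Φ p.1 p.2 := by
    rw [Metric.continuous_iff]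
    rintro ⟨t₀, x₀⟩ ε hε
    obtain ⟨δ, hδ, hδ'⟩ := Metric.continuous_iff.mp (hcont x₀) t₀ (ε / 2) (by linarith)
    refine ⟨min δ (ε / 2), by positivity, ?_⟩
    rintro ⟨t, x⟩ hd
    rw [Prod.dist_eq, max_lt_iff] at hd
    simp only [lt_min_iff] at hd
    calc dist (Φ t x) (Φ t₀ x₀) ≤ dist (Φ t x) (Φ t x₀) + dist (Φ t x₀) (Φ t₀ x₀) :=
          dist_triangle _ _ _
      _ < ε / 2 + ε / 2 := by
          apply add_lt_add_of_le_of_lt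
          · rw [dist_eq_norm, ← map_sub, hiso, ← dist_eq_norm]
            exact hd.2.2.le
          · exact hδ' t hd.1.1
      _ = ε := by ring
  -- constants
  set R : ℝ := ‖u₀‖ + 1 with hRdef
  have hR1 : 1 ≤ R := by simp only [hRdef]; linarith [norm_nonneg u₀]
  have hR0 : (0:ℝ) < R := by linarith
  obtain ⟨L, hL, hLip⟩ := hB R hR0
  set T : ℝ := 1 / (2 * L * R) with hTdef
  have hT : 0 < T := by rw [hTdef]; positivity
  have hLRT : L * R * T = 1 / 2 := by
    rw [hTdef]; field_simp
  have hLT : L * T ≤ 1 / 2 := by nlinarith [mul_pos hL hT]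
  refine ⟨T, hT, ?_⟩
  -- bound for B on ball of radius R
  have hBR : ∀ x : H, ‖x‖ ≤ R → ‖B x‖ ≤ L * R := by
    intro x hx
    have := hLip x 0 hx (by simp [hR0.le])
    rw [hB0, sub_zero, sub_zero] at this
    nlinarith [norm_nonneg x]
  -- continuity of the integral, for continuous w
  have hcomp : ∀ (w : ℝ → H), Continuous w → ∀ t : ℝ,
      Continuous fun s => Φ (t - s) (B (w s)) := fun w hw t =>
    hjoint.comp ((continuous_const.sub continuous_id).prodMk (hBcont.comp hw))
  have hprim : ∀ (w : ℝ → H), Continuous w →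
      Continuous fun t => ∫ s in (0:ℝ)..t, Φ (t - s) (B (w s)) := by
    intro w hw
    have hg : Continuous fun s => Φ (-s) (B (w s)) :=
      hjoint.comp (continuous_neg.prodMk (hBcont.comp hw))
    have hint : ∀ a b : ℝ, IntervalIntegrable (fun s => Φ (-s) (B (w s))) volume a b :=
      fun a b => hg.intervalIntegrable a b
    have heq : ∀ t : ℝ, (∫ s in (0:ℝ)..t, Φ (t - s) (B (w s)))
        = Φ t (∫ s in (0:ℝ)..t, Φ (-s) (B (w s))) := by
      intro t
      rw [← ContinuousLinearMap.intervalIntegral_comp_comm _ (hint 0 t)]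
      apply intervalIntegral.integral_congr
      intro s _
      have : Φ (t - s) = (Φ t).comp (Φ (-s)) := by rw [← hgrp]; ring_nf
      simp [this]
    simp only [heq]
    exact hjoint.comp (continuous_id.prodMk (intervalIntegral.continuous_primitive hint 0))
  -- the Picard map on functions
  set ext : C(Icc (0:ℝ) T, H) → ℝ → H := fun f s => f (projIcc 0 T hT.le s) with hextdef
  have hext : ∀ f, Continuous (ext f) := fun f => f.continuous.comp continuous_projIcc
  have hextval : ∀ f t, ∀ ht : t ∈ Icc (0:ℝ) T, ext f t = f ⟨t, ht⟩ := by
    intro f t ht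
    simp [hextdef, projIcc_of_mem hT.le ht]
  have hub : ∀ (f : C(Icc (0:ℝ) T, H)), ‖f‖ ≤ R → ∀ s, ‖ext f s‖ ≤ R :=
    fun f hf s => le_trans (f.norm_coe_le_norm _) hf
  set map0 : C(Icc (0:ℝ) T, H) → ℝ → H := fun f t =>
    Φ t u₀ - Complex.I • ∫ s in (0:ℝ)..t, Φ (t - s) (B (ext f s)) with hmap0def
  have hmap0c : ∀ f, Continuous (map0 f) :=
    fun f => (hcont u₀).sub ((hprim _ (hext f)).const_smul _)
  -- 𝒯 maps the R-ball into itself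
  have hTmem : ∀ f : C(Icc (0:ℝ) T, H), ‖f‖ ≤ R → ∀ t ∈ Icc (0:ℝ) T, ‖map0 f t‖ ≤ R := by
    intro f hf t ht
    have h1 : ‖∫ s in (0:ℝ)..t, Φ (t - s) (B (ext f s))‖ ≤ L * R * |t - 0| := by
      apply intervalIntegral.norm_integral_le_of_norm_le_const
      intro s _
      rw [hiso]
      exact hBR _ (hub f hf s)
    rw [sub_zero, abs_of_nonneg ht.1] at h1
    have h2 : L * R * t ≤ L * R * T := by nlinarith [mul_pos hL hR0, ht.2]
    calc ‖map0 f t‖ ≤ ‖Φ t u₀‖ + ‖Complex.I • ∫ s in (0:ℝ)..t, Φ (t - s) (B (ext f s))‖ :=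
          norm_sub_le _ _
      _ = ‖u₀‖ + ‖∫ s in (0:ℝ)..t, Φ (t - s) (B (ext f s))‖ := by
          rw [hiso, norm_smul, Complex.norm_I, one_mul]
      _ ≤ ‖u₀‖ + L * R * T := by linarith
      _ ≤ R := by rw [hLRT]; simp [hRdef]; linarith
  obtain ⟨𝒯, h𝒯val⟩ : ∃ 𝒯 : {f : C(Icc (0:ℝ) T, H) // ‖f‖ ≤ R} →
      {f : C(Icc (0:ℝ) T, H) // ‖f‖ ≤ R}, ∀ f x, (𝒯 f).1 x = map0 f.1 x :=
    ⟨fun f => ⟨⟨fun x => map0 f.1 x, (hmap0c f.1).comp continuous_subtype_val⟩,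
      by rw [ContinuousMap.norm_le _ hR0.le]; exact fun x => hTmem f.1 f.2 x x.2⟩,
      fun f x => rfl⟩
  haveI : CompleteSpace {f : C(Icc (0:ℝ) T, H) // ‖f‖ ≤ R} := by
    have hcl : IsClosed {f : C(Icc (0:ℝ) T, H) | ‖f‖ ≤ R} :=
      isClosed_le continuous_norm continuous_const
    exact hcl.completeSpace_coe
  haveI : Nonempty {f : C(Icc (0:ℝ) T, H) // ‖f‖ ≤ R} :=
    ⟨⟨0, by simp [hR0.le]⟩⟩
  -- contraction estimate
  have hdist : ∀ f g : {f : C(Icc (0:ℝ) T, H) // ‖f‖ ≤ R},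
      dist (𝒯 f) (𝒯 g) ≤ (1 / 2) * dist f g := by
    intro f g
    have hd0 : (0:ℝ) ≤ 1 / 2 * dist f g := by positivity
    rw [Subtype.dist_eq, ContinuousMap.dist_le hd0]
    intro x
    have hI1 : IntervalIntegrable (fun s => Φ ((x:ℝ) - s) (B (ext f.1 s))) volume 0 x :=
      (hcomp _ (hext f.1) x).intervalIntegrable 0 x
    have hI2 : IntervalIntegrable (fun s => Φ ((x:ℝ) - s) (B (ext g.1 s))) volume 0 x :=
      (hcomp _ (hext g.1) x).intervalIntegrable 0 x
    have hkey : map0 f.1 x - map0 g.1 x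
        = Complex.I • ∫ s in (0:ℝ)..(x:ℝ), Φ ((x:ℝ) - s) (B (ext g.1 s) - B (ext f.1 s)) := by
      simp only [hmap0def]
      rw [show ∀ a b c : H, (a - b) - (a - c) = c - b from fun a b c => by abel]
      rw [← smul_sub, ← intervalIntegral.integral_sub hI2 hI1]
      congr 1
      apply intervalIntegral.integral_congr
      intro s _
      simp only [map_sub]
    have hnorm : ‖∫ s in (0:ℝ)..(x:ℝ), Φ ((x:ℝ) - s) (B (ext g.1 s) - B (ext f.1 s))‖
        ≤ (L * dist f g) * |(x:ℝ) - 0| := by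
      apply intervalIntegral.norm_integral_le_of_norm_le_const
      intro s _
      rw [hiso]
      have hb1 := hLip (ext g.1 s) (ext f.1 s) (hub g.1 g.2 s) (hub f.1 f.2 s)
      have hb2 : ‖ext g.1 s - ext f.1 s‖ ≤ dist f g := by
        rw [← dist_eq_norm, dist_comm, Subtype.dist_eq]
        exact ContinuousMap.dist_apply_le_dist _
      nlinarith [norm_nonneg (ext g.1 s - ext f.1 s), dist_nonneg (x := f) (y := g)]
    rw [sub_zero, abs_of_nonneg x.2.1] at hnorm
    have hd1 : dist ((𝒯 f).1 x) ((𝒯 g).1 x) = ‖map0 f.1 x - map0 g.1 x‖ := by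
      rw [dist_eq_norm, h𝒯val, h𝒯val]
    rw [hd1, hkey, norm_smul, Complex.norm_I, one_mul]
    calc ‖∫ s in (0:ℝ)..(x:ℝ), Φ ((x:ℝ) - s) (B (ext g.1 s) - B (ext f.1 s))‖
        ≤ L * dist f g * (x:ℝ) := hnorm
      _ ≤ L * dist f g * T := by nlinarith [mul_nonneg hL.le (dist_nonneg (x := f) (y := g)), x.2.2]
      _ ≤ 1 / 2 * dist f g := by nlinarith [dist_nonneg (x := f) (y := g)]
  have hcontraction : ContractingWith (1 / 2 : NNReal) 𝒯 := by
    constructor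
    · rw [← NNReal.coe_lt_coe]; norm_num
    · apply LipschitzWith.of_dist_le_mul
      intro f g
      have := hdist f g
      simpa using this
  obtain ⟨F, hF⟩ : ∃ F, 𝒯 F = F := ⟨_, hcontraction.fixedPoint_isFixedPt⟩
  refine ⟨ext F.1, ⟨(hext F.1).continuousOn, ?_⟩, ?_⟩
  · intro t ht
    have h2 : F.1 ⟨t, ht⟩ = (𝒯 F).1 ⟨t, ht⟩ := by rw [hF]
    rw [hextval F.1 t ht, h2, h𝒯val]
  · -- uniqueness
    intro v ⟨hvc, hveq⟩
    have huc : ContinuousOn (ext F.1) (Icc 0 T) := (hext F.1).continuousOn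
    have hueq : ∀ t ∈ Icc (0:ℝ) T,
        ext F.1 t = Φ t u₀ - Complex.I • ∫ s in (0:ℝ)..t, Φ (t - s) (B (ext F.1 s)) := by
      intro t ht
      have h2 : F.1 ⟨t, ht⟩ = (𝒯 F).1 ⟨t, ht⟩ := by rw [hF]
      rw [hextval F.1 t ht, h2, h𝒯val]
    -- Gronwall-type uniqueness
    obtain ⟨C₁, hC₁⟩ := isCompact_Icc.exists_bound_of_continuousOn huc
    obtain ⟨C₂, hC₂⟩ := isCompact_Icc.exists_bound_of_continuousOn hvc
    set R' : ℝ := max (max C₁ C₂) 1 with hR'def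
    have hR'1 : (1:ℝ) ≤ R' := le_max_right _ _
    have hR'0 : (0:ℝ) < R' := lt_of_lt_of_le one_pos hR'1
    have hb₁ : ∀ t ∈ Icc (0:ℝ) T, ‖ext F.1 t‖ ≤ R' :=
      fun t ht => (hC₁ t ht).trans ((le_max_left _ _).trans (le_max_left _ _))
    have hb₂ : ∀ t ∈ Icc (0:ℝ) T, ‖v t‖ ≤ R' :=
      fun t ht => (hC₂ t ht).trans ((le_max_right _ _).trans (le_max_left _ _))
    obtain ⟨L', hL', hLip'⟩ := hB R' hR'0
    set φ : ℝ → ℝ := fun t => ‖ext F.1 t - v t‖ with hφdef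
    have hφcont : ContinuousOn φ (Icc 0 T) := (huc.sub hvc).norm
    have hsubI : ∀ t ∈ Icc (0:ℝ) T, uIcc (0:ℝ) t ⊆ Icc 0 T := by
      intro t ht
      rw [uIcc_of_le ht.1]
      exact Icc_subset_Icc le_rfl ht.2
    have hφint : ∀ t ∈ Icc (0:ℝ) T, IntervalIntegrable φ volume 0 t :=
      fun t ht => (hφcont.mono (hsubI t ht)).intervalIntegrable
    have hstep : ∀ t ∈ Icc (0:ℝ) T, φ t ≤ L' * ∫ s in (0:ℝ)..t, φ s := by
      intro t ht
      have hc1 : ContinuousOn (fun s => Φ (t - s) (B (ext F.1 s))) (uIcc (0:ℝ) t) :=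
        hjoint.comp_continuousOn (((continuous_const.sub continuous_id).continuousOn).prodMk
          (hBcont.comp_continuousOn (huc.mono (hsubI t ht))))
      have hc2 : ContinuousOn (fun s => Φ (t - s) (B (v s))) (uIcc (0:ℝ) t) :=
        hjoint.comp_continuousOn (((continuous_const.sub continuous_id).continuousOn).prodMk
          (hBcont.comp_continuousOn (hvc.mono (hsubI t ht))))
      have hc3 : ContinuousOn (fun s => Φ (t - s) (B (v s) - B (ext F.1 s))) (uIcc (0:ℝ) t) :=
        hjoint.comp_continuousOn (((continuous_const.sub continuous_id).continuousOn).prodMk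
          (((hBcont.comp_continuousOn (hvc.mono (hsubI t ht)))).sub
            ((hBcont.comp_continuousOn (huc.mono (hsubI t ht))))))
      have hI1 : IntervalIntegrable (fun s => Φ (t - s) (B (ext F.1 s))) volume 0 t :=
        hc1.intervalIntegrable
      have hI2 : IntervalIntegrable (fun s => Φ (t - s) (B (v s))) volume 0 t :=
        hc2.intervalIntegrable
      have hkey : ext F.1 t - v t
          = Complex.I • ∫ s in (0:ℝ)..t, Φ (t - s) (B (v s) - B (ext F.1 s)) := by
        rw [hueq t ht, hveq t ht]
        rw [show ∀ a b c : H, (a - b) - (a - c) = c - b from fun a b c => by abel]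
        rw [← smul_sub, ← intervalIntegral.integral_sub hI2 hI1]
        congr 1
        apply intervalIntegral.integral_congr
        intro s _
        simp only [map_sub]
      have hφeq : φ t = ‖∫ s in (0:ℝ)..t, Φ (t - s) (B (v s) - B (ext F.1 s))‖ := by
        rw [show φ t = ‖ext F.1 t - v t‖ from rfl, hkey, norm_smul, Complex.norm_I, one_mul]
      calc φ t = ‖∫ s in (0:ℝ)..t, Φ (t - s) (B (v s) - B (ext F.1 s))‖ := hφeq
        _ ≤ ∫ s in (0:ℝ)..t, ‖Φ (t - s) (B (v s) - B (ext F.1 s))‖ :=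
            intervalIntegral.norm_integral_le_integral_norm ht.1
        _ ≤ ∫ s in (0:ℝ)..t, L' * φ s := by
            apply intervalIntegral.integral_mono_on ht.1 hc3.norm.intervalIntegrable
              ((hφint t ht).const_mul L')
            intro s hs
            have hs' : s ∈ Icc (0:ℝ) T := ⟨hs.1, hs.2.trans ht.2⟩
            rw [hiso]
            calc ‖B (v s) - B (ext F.1 s)‖ ≤ L' * ‖v s - ext F.1 s‖ :=
                  hLip' _ _ (hb₂ s hs') (hb₁ s hs')
              _ = L' * φ s := by rw [show φ s = ‖ext F.1 s - v s‖ from rfl, norm_sub_rev]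
        _ = L' * ∫ s in (0:ℝ)..t, φ s := intervalIntegral.integral_const_mul L' φ
    have hM : ∀ t ∈ Icc (0:ℝ) T, φ t ≤ 2 * R' := by
      intro t ht
      calc φ t ≤ ‖ext F.1 t‖ + ‖v t‖ := norm_sub_le _ _
        _ ≤ 2 * R' := by linarith [hb₁ t ht, hb₂ t ht]
    have hind : ∀ n : ℕ, ∀ t ∈ Icc (0:ℝ) T,
        φ t ≤ 2 * R' * (L' * t) ^ n / (n.factorial : ℝ) := by
      intro n
      induction n with
      | zero => intro t ht; simpa using hM t ht
      | succ n ih =>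
        intro t ht
        have h1 := hstep t ht
        have hcle : Continuous fun s : ℝ => 2 * R' * L' ^ n / (n.factorial : ℝ) * s ^ n :=
          continuous_const.mul (continuous_pow n)
        have h2 : (∫ s in (0:ℝ)..t, φ s)
            ≤ ∫ s in (0:ℝ)..t, 2 * R' * L' ^ n / (n.factorial : ℝ) * s ^ n := by
          apply intervalIntegral.integral_mono_on ht.1 (hφint t ht) (hcle.intervalIntegrable 0 t)
          intro s hs
          calc φ s ≤ 2 * R' * (L' * s) ^ n / (n.factorial : ℝ) :=
                ih s ⟨hs.1, hs.2.trans ht.2⟩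
            _ = 2 * R' * L' ^ n / (n.factorial : ℝ) * s ^ n := by rw [mul_pow]; ring
        have h3 : (∫ s in (0:ℝ)..t, 2 * R' * L' ^ n / (n.factorial : ℝ) * s ^ n)
            = 2 * R' * L' ^ n / (n.factorial : ℝ) * (t ^ (n + 1) / ((n : ℝ) + 1)) := by
          have hip : (∫ x in (0:ℝ)..t, x ^ n) = (t ^ (n + 1) - 0 ^ (n + 1)) / ((n:ℝ) + 1) := by
            open intervalIntegral in exact integral_pow n
          rw [intervalIntegral.integral_const_mul, hip]
          norm_num
        have hfac : (((n + 1).factorial : ℕ) : ℝ) = ((n : ℝ) + 1) * (n.factorial : ℝ) := by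
          rw [Nat.factorial_succ]; push_cast; ring
        have hn0 : (0:ℝ) < (n.factorial : ℝ) := by exact_mod_cast n.factorial_pos
        calc φ t ≤ L' * ∫ s in (0:ℝ)..t, φ s := h1
          _ ≤ L' * (2 * R' * L' ^ n / (n.factorial : ℝ) * (t ^ (n + 1) / ((n : ℝ) + 1))) := by
              rw [← h3]; exact mul_le_mul_of_nonneg_left h2 hL'.le
          _ = 2 * R' * (L' * t) ^ (n + 1) / (((n + 1).factorial : ℕ) : ℝ) := by
              rw [hfac, mul_pow]
              have hn1 : ((n : ℝ) + 1) ≠ 0 := by positivity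
              field_simp
              ring
    intro t ht
    have hlim : Tendsto (fun n : ℕ => 2 * R' * (L' * t) ^ n / (n.factorial : ℝ)) atTop (nhds 0) := by
      have := (FloorSemiring.tendsto_pow_div_factorial_atTop (K := ℝ) (L' * t)).const_mul (2 * R')
      simpa [mul_div_assoc] using this
    have h0 : φ t ≤ 0 := ge_of_tendsto' hlim (fun n => hind n t ht)
    have hz : ext F.1 t - v t = 0 := by
      rw [← norm_le_zero_iff]
      exact h0
    exact sub_eq_zero.mp hz
end

section
/- Let d ≥ 1 and ω_1, …, ω_d ∈ ℝ, and set Ω(x) = Σ_{j=1}^d ω_j² x_j². Then for every Schwartz function u : ℝ^d → ℂ, with Δu = Σ_{j=1}^d ∂²u/∂x_j², one has 2 Re ∫_{ℝ^d} (Δu)(x) conj(Ω(x) u(x)) dx ≤ 2 (Σ_{j=1}^d ω_j²) ∫_{ℝ^d} |u(x)|² dx. -/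
open MeasureTheory Filter Set

/-- The Laplacian `Δu = Σ_j ∂²u/∂x_j²` of a function on `ℝ^d`. -/
noncomputable def laplacian {d : ℕ} (u : EuclideanSpace ℝ (Fin d) → ℂ)
    (x : EuclideanSpace ℝ (Fin d)) : ℂ :=
  ∑ j : Fin d,
    fderiv ℝ (fun y => fderiv ℝ u y (EuclideanSpace.single j 1)) x
      (EuclideanSpace.single j 1)

namespace Stmt18Aux

open SchwartzMap Complex

variable {d : ℕ}

noncomputable def pderivCLM (_𝕜 : Type) (m : EuclideanSpace ℝ (Fin d)) :
    𝓢(EuclideanSpace ℝ (Fin d), ℂ) →L[ℝ] 𝓢(EuclideanSpace ℝ (Fin d), ℂ) :=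
  LineDeriv.lineDerivOpCLM ℝ _ m

lemma pderivCLM_apply (𝕜 : Type) (m : EuclideanSpace ℝ (Fin d))
    (f : 𝓢(EuclideanSpace ℝ (Fin d), ℂ)) (x : EuclideanSpace ℝ (Fin d)) :
    pderivCLM 𝕜 m f x = fderiv ℝ f x m := rfl

lemma coord_le_norm (x : EuclideanSpace ℝ (Fin d)) (j : Fin d) : |x j| ≤ ‖x‖ := by
  rw [EuclideanSpace.norm_eq, ← Real.sqrt_sq_eq_abs]
  apply Real.sqrt_le_sqrt
  simpa [Real.norm_eq_abs, sq_abs] using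
    Finset.single_le_sum (f := fun i => ‖x i‖ ^ 2) (fun i _ => sq_nonneg _) (Finset.mem_univ j)

lemma sq_coord_le_norm_sq (x : EuclideanSpace ℝ (Fin d)) (j : Fin d) : x j ^ 2 ≤ ‖x‖ ^ 2 := by
  have h := coord_le_norm x j
  nlinarith [abs_nonneg (x j), _root_.sq_abs (x j)]

lemma key_hasFDerivAt (φ ψ : 𝓢(EuclideanSpace ℝ (Fin d), ℂ))
    (x : EuclideanSpace ℝ (Fin d)) :
    HasFDerivAt (fun y => ((φ y) * (starRingEnd ℂ) (ψ y)).re)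
      (Complex.reCLM.comp
        ((φ x • (Complex.conjCLE.toContinuousLinearMap.comp (fderiv ℝ ψ x))) +
          ((starRingEnd ℂ) (ψ x)) • fderiv ℝ φ x)) x := by
  have hφ : HasFDerivAt φ (fderiv ℝ φ x) x := (φ.differentiable x).hasFDerivAt
  have hψ : HasFDerivAt ψ (fderiv ℝ ψ x) x := (ψ.differentiable x).hasFDerivAt
  have hc : HasFDerivAt (fun y => (starRingEnd ℂ) (ψ y))
      (Complex.conjCLE.toContinuousLinearMap.comp (fderiv ℝ ψ x)) x :=
    Complex.conjCLE.toContinuousLinearMap.hasFDerivAt.comp x hψ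
  exact Complex.reCLM.hasFDerivAt.comp x (hφ.mul hc)

lemma key_diff (φ ψ : 𝓢(EuclideanSpace ℝ (Fin d), ℂ)) :
    Differentiable ℝ (fun y => ((φ y) * (starRingEnd ℂ) (ψ y)).re) :=
  fun x => (key_hasFDerivAt φ ψ x).differentiableAt

lemma key_fderiv (φ ψ : 𝓢(EuclideanSpace ℝ (Fin d), ℂ)) (x w : EuclideanSpace ℝ (Fin d)) :
    fderiv ℝ (fun y => ((φ y) * (starRingEnd ℂ) (ψ y)).re) x w
      = (fderiv ℝ φ x w * (starRingEnd ℂ) (ψ x)).re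
        + ((φ x) * (starRingEnd ℂ) (fderiv ℝ ψ x w)).re := by
  rw [(key_hasFDerivAt φ ψ x).fderiv]
  simp only [ContinuousLinearMap.coe_comp', Function.comp_apply,
    ContinuousLinearMap.add_apply, ContinuousLinearMap.coe_smul', Pi.smul_apply,
    ContinuousLinearMap.coe_coe, ContinuousLinearEquiv.coe_coe, Complex.reCLM_apply,
    smul_eq_mul, Complex.add_re]
  have : Complex.conjCLE (fderiv ℝ ψ x w) = (starRingEnd ℂ) (fderiv ℝ ψ x w) := rfl
  rw [this, mul_comm ((starRingEnd ℂ) (ψ x)) (fderiv ℝ φ x w), add_comm]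

lemma re_mul_conj_abs_le (z w : ℂ) : |(z * (starRingEnd ℂ) w).re| ≤ ‖z‖ * ‖w‖ := by
  calc |(z * (starRingEnd ℂ) w).re| ≤ ‖z * (starRingEnd ℂ) w‖ :=
        Complex.abs_re_le_norm _
    _ = ‖z‖ * ‖w‖ := by
        rw [norm_mul, RCLike.norm_conj]

lemma integrable_of_bound {V : Type*} [NormedAddCommGroup V]
    (φ ψ : 𝓢(EuclideanSpace ℝ (Fin d), ℂ)) (k : ℕ) (C : ℝ) (hC : 0 ≤ C)
    (F : EuclideanSpace ℝ (Fin d) → V) (hF : Continuous F)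
    (hle : ∀ x, ‖F x‖ ≤ C * (‖x‖ ^ k * (‖φ x‖ * ‖ψ x‖))) : Integrable F volume := by
  have hψ : ∀ x, ‖ψ x‖ ≤ (SchwartzMap.seminorm ℝ 0 0) ψ := ψ.norm_le_seminorm ℝ
  have hCψ : (0:ℝ) ≤ (SchwartzMap.seminorm ℝ 0 0) ψ := le_trans (norm_nonneg _) (hψ 0)
  refine ((φ.integrable_pow_mul volume k).const_mul
    (C * (SchwartzMap.seminorm ℝ 0 0) ψ)).mono' hF.aestronglyMeasurable
    (Filter.Eventually.of_forall fun x => ?_)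
  refine (hle x).trans ?_
  have h2 := hψ x
  have hb : (0:ℝ) ≤ ‖x‖ ^ k * ‖φ x‖ := by positivity
  calc C * (‖x‖ ^ k * (‖φ x‖ * ‖ψ x‖))
      ≤ C * (‖x‖ ^ k * (‖φ x‖ * (SchwartzMap.seminorm ℝ 0 0) ψ)) := by
        apply mul_le_mul_of_nonneg_left _ hC
        apply mul_le_mul_of_nonneg_left _ (by positivity)
        exact mul_le_mul_of_nonneg_left h2 (norm_nonneg _)
    _ = C * (SchwartzMap.seminorm ℝ 0 0) ψ * (‖x‖ ^ k * ‖φ x‖) := by ring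

lemma omega_hasFDerivAt (ω : Fin d → ℝ) (x : EuclideanSpace ℝ (Fin d)) :
    HasFDerivAt (fun y : EuclideanSpace ℝ (Fin d) => ∑ k, ω k ^ 2 * y k ^ 2)
      (∑ k, (ω k ^ 2 * (2 * x k)) • (EuclideanSpace.proj k :
        EuclideanSpace ℝ (Fin d) →L[ℝ] ℝ)) x := by
  refine HasFDerivAt.fun_sum fun k _ => ?_
  have h1 : HasFDerivAt (fun y : EuclideanSpace ℝ (Fin d) => y k)
      (EuclideanSpace.proj k : EuclideanSpace ℝ (Fin d) →L[ℝ] ℝ) x :=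
    (EuclideanSpace.proj k : EuclideanSpace ℝ (Fin d) →L[ℝ] ℝ).hasFDerivAt
  have h2 := (h1.fun_mul h1).const_mul (ω k ^ 2)
  have hfun : (fun y : EuclideanSpace ℝ (Fin d) => ω k ^ 2 * y k ^ 2)
      = fun y : EuclideanSpace ℝ (Fin d) => ω k ^ 2 * (y k * y k) := by
    funext y; ring
  rw [hfun]
  refine h2.congr_fderiv ?_
  ext w
  simp only [ContinuousLinearMap.smul_apply, smul_eq_mul, ContinuousLinearMap.add_apply,
    Pi.smul_apply]
  ring

lemma omega_diff (ω : Fin d → ℝ) :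
    Differentiable ℝ (fun y : EuclideanSpace ℝ (Fin d) => ∑ k, ω k ^ 2 * y k ^ 2) :=
  fun x => (omega_hasFDerivAt ω x).differentiableAt

lemma omega_fderiv (ω : Fin d → ℝ) (x : EuclideanSpace ℝ (Fin d)) (j : Fin d) :
    fderiv ℝ (fun y : EuclideanSpace ℝ (Fin d) => ∑ k, ω k ^ 2 * y k ^ 2) x
      (EuclideanSpace.single j 1) = 2 * ω j ^ 2 * x j := by
  rw [(omega_hasFDerivAt ω x).fderiv, ContinuousLinearMap.sum_apply]
  rw [Finset.sum_eq_single j]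
  · simp [EuclideanSpace.single_apply]
    ring
  · intro k _ hk
    simp only [ContinuousLinearMap.smul_apply, smul_eq_mul, PiLp.proj_apply,
      EuclideanSpace.single_apply]
    rw [if_neg hk]
    ring
  · intro h; exact absurd (Finset.mem_univ j) h

lemma omega_nonneg (ω : Fin d → ℝ) (x : EuclideanSpace ℝ (Fin d)) :
    0 ≤ ∑ k, ω k ^ 2 * x k ^ 2 :=
  Finset.sum_nonneg fun k _ => mul_nonneg (sq_nonneg _) (sq_nonneg _)

lemma omega_abs_le (ω : Fin d → ℝ) (x : EuclideanSpace ℝ (Fin d)) :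
    |∑ k, ω k ^ 2 * x k ^ 2| ≤ (∑ k, ω k ^ 2) * ‖x‖ ^ 2 := by
  rw [_root_.abs_of_nonneg (omega_nonneg ω x), Finset.sum_mul]
  exact Finset.sum_le_sum fun k _ =>
    mul_le_mul_of_nonneg_left (sq_coord_le_norm_sq x k) (sq_nonneg _)

/-- The main per-coordinate estimate, obtained by two integrations by parts. -/
lemma per_coord (ω : Fin d → ℝ) (u : 𝓢(EuclideanSpace ℝ (Fin d), ℂ)) (j : Fin d) :
    2 * ∫ x : EuclideanSpace ℝ (Fin d),
        (∑ k, ω k ^ 2 * x k ^ 2) *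
          ((pderivCLM ℝ (EuclideanSpace.single j 1)
              (pderivCLM ℝ (EuclideanSpace.single j 1) u)) x * (starRingEnd ℂ) (u x)).re
      ≤ 2 * ω j ^ 2 * ∫ x : EuclideanSpace ℝ (Fin d), ‖u x‖ ^ 2 := by
  classical
  set v : EuclideanSpace ℝ (Fin d) := EuclideanSpace.single j 1 with hv
  set φ1 : 𝓢(EuclideanSpace ℝ (Fin d), ℂ) := pderivCLM ℝ v u with hφ1
  set φ2 : 𝓢(EuclideanSpace ℝ (Fin d), ℂ) := pderivCLM ℝ v φ1 with hφ2
  set S : ℝ := ∑ k, ω k ^ 2 with hS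
  have hS0 : 0 ≤ S := Finset.sum_nonneg fun k _ => sq_nonneg _
  -- basic pointwise derivative identities
  have hφ1x : ∀ x, fderiv ℝ (⇑u) x v = φ1 x := fun x => (pderivCLM_apply ℝ v u x).symm
  have hφ2x : ∀ x, fderiv ℝ (⇑φ1) x v = φ2 x := fun x => (pderivCLM_apply ℝ v φ1 x).symm
  -- the functions |u|² and its directional derivative g
  have hdf : Differentiable ℝ (fun y => ((u y) * (starRingEnd ℂ) (u y)).re) := key_diff u u
  have hdg : Differentiable ℝ (fun y => 2 * ((φ1 y) * (starRingEnd ℂ) (u y)).re) :=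
    (key_diff φ1 u).const_mul 2
  have hflip : ∀ z w : ℂ, (z * (starRingEnd ℂ) w).re = (w * (starRingEnd ℂ) z).re := by
    intro z w
    have h : w * (starRingEnd ℂ) z = (starRingEnd ℂ) (z * (starRingEnd ℂ) w) := by
      rw [map_mul, Complex.conj_conj]; ring
    rw [h, Complex.conj_re]
  have hfd : ∀ x, fderiv ℝ (fun y => ((u y) * (starRingEnd ℂ) (u y)).re) x v
      = 2 * ((φ1 x) * (starRingEnd ℂ) (u x)).re := by
    intro x
    rw [key_fderiv u u x v, hφ1x]
    rw [hflip (u x) (φ1 x)]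
    ring
  have hgd : ∀ x, fderiv ℝ (fun y => 2 * ((φ1 y) * (starRingEnd ℂ) (u y)).re) x v
      = 2 * ((φ2 x) * (starRingEnd ℂ) (u x)).re
        + 2 * ((φ1 x) * (starRingEnd ℂ) (φ1 x)).re := by
    intro x
    rw [fderiv_const_mul ((key_diff φ1 u) x) 2]
    simp only [ContinuousLinearMap.coe_smul', Pi.smul_apply, smul_eq_mul]
    rw [key_fderiv φ1 u x v, hφ2x, hφ1x]
    ring
  -- Ω facts
  have hΩdiff := omega_diff (d := d) ω
  have hΩfd : ∀ x : EuclideanSpace ℝ (Fin d),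
      fderiv ℝ (fun y : EuclideanSpace ℝ (Fin d) => ∑ k, ω k ^ 2 * y k ^ 2) x v
        = 2 * ω j ^ 2 * x j := fun x => omega_fderiv ω x j
  -- the coordinate function
  have hcoord : ∀ x : EuclideanSpace ℝ (Fin d),
      HasFDerivAt (fun y : EuclideanSpace ℝ (Fin d) => y j)
        (EuclideanSpace.proj j : EuclideanSpace ℝ (Fin d) →L[ℝ] ℝ) x :=
    fun x => (EuclideanSpace.proj j : EuclideanSpace ℝ (Fin d) →L[ℝ] ℝ).hasFDerivAt
  have hcd : Differentiable ℝ (fun y : EuclideanSpace ℝ (Fin d) => y j) :=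
    fun x => (hcoord x).differentiableAt
  have hcdv : ∀ x : EuclideanSpace ℝ (Fin d),
      fderiv ℝ (fun y : EuclideanSpace ℝ (Fin d) => y j) x v = 1 := by
    intro x
    rw [(hcoord x).fderiv]
    simp [hv, EuclideanSpace.single_apply]
  -- continuity helpers
  have hΩcont : Continuous (fun y : EuclideanSpace ℝ (Fin d) => ∑ k, ω k ^ 2 * y k ^ 2) :=
    hΩdiff.continuous
  have hccont : Continuous (fun y : EuclideanSpace ℝ (Fin d) => y j) := hcd.continuous
  -- integrability statements
  have iΩg : Integrable (fun x : EuclideanSpace ℝ (Fin d) =>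
      (∑ k, ω k ^ 2 * x k ^ 2) * (2 * ((φ1 x) * (starRingEnd ℂ) (u x)).re)) volume := by
    refine integrable_of_bound φ1 u 2 (2 * S) (by positivity) _
      (hΩcont.mul (continuous_const.mul (key_diff φ1 u).continuous)) fun x => ?_
    have h1 := omega_abs_le ω x
    have h2 := re_mul_conj_abs_le (φ1 x) (u x)
    rw [Real.norm_eq_abs, abs_mul, abs_mul]
    have hn : (0:ℝ) ≤ ‖φ1 x‖ * ‖u x‖ := by positivity
    calc |∑ k, ω k ^ 2 * x k ^ 2| * (|(2:ℝ)| * |((φ1 x) * (starRingEnd ℂ) (u x)).re|)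
        ≤ (S * ‖x‖ ^ 2) * (2 * (‖φ1 x‖ * ‖u x‖)) := by
          apply mul_le_mul h1 _ (by positivity) (by positivity)
          rw [_root_.abs_two]
          exact mul_le_mul_of_nonneg_left h2 (by norm_num)
      _ = 2 * S * (‖x‖ ^ 2 * (‖φ1 x‖ * ‖u x‖)) := by ring
  have iG : Integrable (fun x : EuclideanSpace ℝ (Fin d) =>
      (∑ k, ω k ^ 2 * x k ^ 2) * (2 * ((φ2 x) * (starRingEnd ℂ) (u x)).re)) volume := by
    refine integrable_of_bound φ2 u 2 (2 * S) (by positivity) _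
      (hΩcont.mul (continuous_const.mul (key_diff φ2 u).continuous)) fun x => ?_
    have h1 := omega_abs_le ω x
    have h2 := re_mul_conj_abs_le (φ2 x) (u x)
    rw [Real.norm_eq_abs, abs_mul, abs_mul]
    calc |∑ k, ω k ^ 2 * x k ^ 2| * (|(2:ℝ)| * |((φ2 x) * (starRingEnd ℂ) (u x)).re|)
        ≤ (S * ‖x‖ ^ 2) * (2 * (‖φ2 x‖ * ‖u x‖)) := by
          apply mul_le_mul h1 _ (by positivity) (by positivity)
          rw [_root_.abs_two]
          exact mul_le_mul_of_nonneg_left h2 (by norm_num)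
      _ = 2 * S * (‖x‖ ^ 2 * (‖φ2 x‖ * ‖u x‖)) := by ring
  have iB : Integrable (fun x : EuclideanSpace ℝ (Fin d) =>
      (∑ k, ω k ^ 2 * x k ^ 2) * (2 * ((φ1 x) * (starRingEnd ℂ) (φ1 x)).re)) volume := by
    refine integrable_of_bound φ1 φ1 2 (2 * S) (by positivity) _
      (hΩcont.mul (continuous_const.mul (key_diff φ1 φ1).continuous)) fun x => ?_
    have h1 := omega_abs_le ω x
    have h2 := re_mul_conj_abs_le (φ1 x) (φ1 x)
    rw [Real.norm_eq_abs, abs_mul, abs_mul]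
    calc |∑ k, ω k ^ 2 * x k ^ 2| * (|(2:ℝ)| * |((φ1 x) * (starRingEnd ℂ) (φ1 x)).re|)
        ≤ (S * ‖x‖ ^ 2) * (2 * (‖φ1 x‖ * ‖φ1 x‖)) := by
          apply mul_le_mul h1 _ (by positivity) (by positivity)
          rw [_root_.abs_two]
          exact mul_le_mul_of_nonneg_left h2 (by norm_num)
      _ = 2 * S * (‖x‖ ^ 2 * (‖φ1 x‖ * ‖φ1 x‖)) := by ring
  have iΩg' : Integrable (fun x : EuclideanSpace ℝ (Fin d) =>
      (∑ k, ω k ^ 2 * x k ^ 2) *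
        fderiv ℝ (fun y => 2 * ((φ1 y) * (starRingEnd ℂ) (u y)).re) x v) volume := by
    refine (iG.add iB).congr (Filter.Eventually.of_forall fun x => ?_)
    simp only [Pi.add_apply, hgd]
    ring
  have idOg : Integrable (fun x : EuclideanSpace ℝ (Fin d) =>
      fderiv ℝ (fun y : EuclideanSpace ℝ (Fin d) => ∑ k, ω k ^ 2 * y k ^ 2) x v *
        (2 * ((φ1 x) * (starRingEnd ℂ) (u x)).re)) volume := by
    have : Integrable (fun x : EuclideanSpace ℝ (Fin d) =>
        (2 * ω j ^ 2 * x j) * (2 * ((φ1 x) * (starRingEnd ℂ) (u x)).re)) volume := by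
      refine integrable_of_bound φ1 u 1 (4 * ω j ^ 2) (by positivity) _
        ((continuous_const.mul hccont).mul
          (continuous_const.mul (key_diff φ1 u).continuous)) fun x => ?_
      have h2 := re_mul_conj_abs_le (φ1 x) (u x)
      have h3 := coord_le_norm x j
      rw [Real.norm_eq_abs, abs_mul]
      have h4 : |2 * ω j ^ 2 * x j| ≤ 2 * ω j ^ 2 * ‖x‖ := by
        rw [abs_mul, abs_mul, _root_.abs_two, _root_.abs_of_nonneg (sq_nonneg (ω j))]
        exact mul_le_mul_of_nonneg_left h3 (by positivity)
      have h5 : |2 * ((φ1 x) * (starRingEnd ℂ) (u x)).re| ≤ 2 * (‖φ1 x‖ * ‖u x‖) := by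
        rw [abs_mul, _root_.abs_two]
        exact mul_le_mul_of_nonneg_left h2 (by norm_num)
      calc |2 * ω j ^ 2 * x j| * |2 * ((φ1 x) * (starRingEnd ℂ) (u x)).re|
          ≤ (2 * ω j ^ 2 * ‖x‖) * (2 * (‖φ1 x‖ * ‖u x‖)) :=
            mul_le_mul h4 h5 (abs_nonneg _) (by positivity)
        _ = 4 * ω j ^ 2 * (‖x‖ ^ 1 * (‖φ1 x‖ * ‖u x‖)) := by ring
    refine this.congr (Filter.Eventually.of_forall fun x => ?_)
    simp only [hΩfd]
  have ifsq : Integrable (fun x : EuclideanSpace ℝ (Fin d) =>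
      ((u x) * (starRingEnd ℂ) (u x)).re) volume := by
    refine integrable_of_bound u u 0 1 zero_le_one _ (key_diff u u).continuous fun x => ?_
    rw [Real.norm_eq_abs]
    simpa using re_mul_conj_abs_le (u x) (u x)
  have icfsq : Integrable (fun x : EuclideanSpace ℝ (Fin d) =>
      x j * ((u x) * (starRingEnd ℂ) (u x)).re) volume := by
    refine integrable_of_bound u u 1 1 zero_le_one _
      (hccont.mul (key_diff u u).continuous) fun x => ?_
    have h2 := re_mul_conj_abs_le (u x) (u x)
    have h3 := coord_le_norm x j
    rw [Real.norm_eq_abs, abs_mul]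
    calc |x j| * |((u x) * (starRingEnd ℂ) (u x)).re|
        ≤ ‖x‖ * (‖u x‖ * ‖u x‖) :=
          mul_le_mul h3 h2 (abs_nonneg _) (norm_nonneg _)
      _ = 1 * (‖x‖ ^ 1 * (‖u x‖ * ‖u x‖)) := by ring
  have icg : Integrable (fun x : EuclideanSpace ℝ (Fin d) =>
      x j * fderiv ℝ (fun y => ((u y) * (starRingEnd ℂ) (u y)).re) x v) volume := by
    have : Integrable (fun x : EuclideanSpace ℝ (Fin d) =>
        x j * (2 * ((φ1 x) * (starRingEnd ℂ) (u x)).re)) volume := by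
      refine integrable_of_bound φ1 u 1 2 (by norm_num) _
        (hccont.mul (continuous_const.mul (key_diff φ1 u).continuous)) fun x => ?_
      have h2 := re_mul_conj_abs_le (φ1 x) (u x)
      have h3 := coord_le_norm x j
      rw [Real.norm_eq_abs, abs_mul, abs_mul, _root_.abs_two]
      calc |x j| * (2 * |((φ1 x) * (starRingEnd ℂ) (u x)).re|)
          ≤ ‖x‖ * (2 * (‖φ1 x‖ * ‖u x‖)) := by
            apply mul_le_mul h3 _ (by positivity) (norm_nonneg _)
            exact mul_le_mul_of_nonneg_left h2 (by norm_num)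
        _ = 2 * (‖x‖ ^ 1 * (‖φ1 x‖ * ‖u x‖)) := by ring
    refine this.congr (Filter.Eventually.of_forall fun x => ?_)
    simp only [hfd]
  have idcfsq : Integrable (fun x : EuclideanSpace ℝ (Fin d) =>
      fderiv ℝ (fun y : EuclideanSpace ℝ (Fin d) => y j) x v *
        ((u x) * (starRingEnd ℂ) (u x)).re) volume := by
    refine ifsq.congr (Filter.Eventually.of_forall fun x => ?_)
    simp only [hcdv, one_mul]
  -- first integration by parts
  have ibp1 := integral_mul_fderiv_eq_neg_fderiv_mul_of_integrable
    (f := fun y : EuclideanSpace ℝ (Fin d) => ∑ k, ω k ^ 2 * y k ^ 2)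
    (g := fun y => 2 * ((φ1 y) * (starRingEnd ℂ) (u y)).re) (v := v)
    idOg iΩg' iΩg (fun x _ => hΩdiff x) (fun x _ => hdg x)
  -- second integration by parts
  have ibp2 := integral_mul_fderiv_eq_neg_fderiv_mul_of_integrable
    (f := fun y : EuclideanSpace ℝ (Fin d) => y j)
    (g := fun y => ((u y) * (starRingEnd ℂ) (u y)).re) (v := v)
    idcfsq icg icfsq (fun x _ => hcd x) (fun x _ => hdf x)
  -- compute ∫ x_j * g = - ∫ fsq
  have e2 : ∫ x : EuclideanSpace ℝ (Fin d),
      x j * (2 * ((φ1 x) * (starRingEnd ℂ) (u x)).re)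
      = - ∫ x : EuclideanSpace ℝ (Fin d), ((u x) * (starRingEnd ℂ) (u x)).re := by
    have lhs_eq : ∫ x : EuclideanSpace ℝ (Fin d),
        x j * (2 * ((φ1 x) * (starRingEnd ℂ) (u x)).re)
        = ∫ x : EuclideanSpace ℝ (Fin d),
          x j * fderiv ℝ (fun y => ((u y) * (starRingEnd ℂ) (u y)).re) x v := by
      apply integral_congr_ae
      refine Filter.Eventually.of_forall fun x => ?_
      simp only [hfd]
    have rhs_eq : ∫ x : EuclideanSpace ℝ (Fin d),
        fderiv ℝ (fun y : EuclideanSpace ℝ (Fin d) => y j) x v *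
          ((u x) * (starRingEnd ℂ) (u x)).re
        = ∫ x : EuclideanSpace ℝ (Fin d), ((u x) * (starRingEnd ℂ) (u x)).re := by
      apply integral_congr_ae
      refine Filter.Eventually.of_forall fun x => ?_
      simp only [hcdv, one_mul]
    rw [lhs_eq, ibp2, rhs_eq]
  -- compute ∫ Ω * g' = 2 ω_j² ∫ fsq
  have e1 : ∫ x : EuclideanSpace ℝ (Fin d),
      (∑ k, ω k ^ 2 * x k ^ 2) *
        fderiv ℝ (fun y => 2 * ((φ1 y) * (starRingEnd ℂ) (u y)).re) x v
      = 2 * ω j ^ 2 * ∫ x : EuclideanSpace ℝ (Fin d),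
          ((u x) * (starRingEnd ℂ) (u x)).re := by
    rw [ibp1]
    have : ∫ x : EuclideanSpace ℝ (Fin d),
        fderiv ℝ (fun y : EuclideanSpace ℝ (Fin d) => ∑ k, ω k ^ 2 * y k ^ 2) x v *
          (2 * ((φ1 x) * (starRingEnd ℂ) (u x)).re)
        = 2 * ω j ^ 2 * ∫ x : EuclideanSpace ℝ (Fin d),
            x j * (2 * ((φ1 x) * (starRingEnd ℂ) (u x)).re) := by
      rw [← integral_const_mul]
      apply integral_congr_ae
      refine Filter.Eventually.of_forall fun x => ?_
      simp only [hΩfd]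
      ring
    rw [this, e2]
    ring
  -- split ∫ Ω * g' into the two pieces
  have e3 : ∫ x : EuclideanSpace ℝ (Fin d),
      (∑ k, ω k ^ 2 * x k ^ 2) *
        fderiv ℝ (fun y => 2 * ((φ1 y) * (starRingEnd ℂ) (u y)).re) x v
      = (∫ x : EuclideanSpace ℝ (Fin d),
          (∑ k, ω k ^ 2 * x k ^ 2) * (2 * ((φ2 x) * (starRingEnd ℂ) (u x)).re))
        + ∫ x : EuclideanSpace ℝ (Fin d),
          (∑ k, ω k ^ 2 * x k ^ 2) * (2 * ((φ1 x) * (starRingEnd ℂ) (φ1 x)).re) := by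
    rw [← integral_add iG iB]
    apply integral_congr_ae
    refine Filter.Eventually.of_forall fun x => ?_
    simp only [Pi.add_apply, hgd]
    ring
  -- the discarded term is nonnegative
  have e4 : 0 ≤ ∫ x : EuclideanSpace ℝ (Fin d),
      (∑ k, ω k ^ 2 * x k ^ 2) * (2 * ((φ1 x) * (starRingEnd ℂ) (φ1 x)).re) := by
    apply integral_nonneg
    intro x
    have h1 := omega_nonneg ω x
    have h2 : 0 ≤ ((φ1 x) * (starRingEnd ℂ) (φ1 x)).re := by
      rw [Complex.mul_conj]
      simpa using Complex.normSq_nonneg (φ1 x)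
    positivity
  -- |u|² = fsq
  have e5 : ∫ x : EuclideanSpace ℝ (Fin d), ((u x) * (starRingEnd ℂ) (u x)).re
      = ∫ x : EuclideanSpace ℝ (Fin d), ‖u x‖ ^ 2 := by
    apply integral_congr_ae
    refine Filter.Eventually.of_forall fun x => ?_
    simp only [Complex.mul_conj, Complex.ofReal_re, Complex.normSq_eq_norm_sq]
  -- put it together
  have key : ∫ x : EuclideanSpace ℝ (Fin d),
      (∑ k, ω k ^ 2 * x k ^ 2) * (2 * ((φ2 x) * (starRingEnd ℂ) (u x)).re)
      ≤ 2 * ω j ^ 2 * ∫ x : EuclideanSpace ℝ (Fin d), ‖u x‖ ^ 2 := by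
    have := e3 ▸ e1
    rw [← e5]
    linarith
  have final : 2 * ∫ x : EuclideanSpace ℝ (Fin d),
      (∑ k, ω k ^ 2 * x k ^ 2) * ((φ2 x) * (starRingEnd ℂ) (u x)).re
      = ∫ x : EuclideanSpace ℝ (Fin d),
        (∑ k, ω k ^ 2 * x k ^ 2) * (2 * ((φ2 x) * (starRingEnd ℂ) (u x)).re) := by
    rw [← integral_const_mul]
    apply integral_congr_ae
    refine Filter.Eventually.of_forall fun x => ?_
    show 2 * ((∑ k, ω k ^ 2 * x k ^ 2) * ((φ2 x) * (starRingEnd ℂ) (u x)).re)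
        = (∑ k, ω k ^ 2 * x k ^ 2) * (2 * ((φ2 x) * (starRingEnd ℂ) (u x)).re)
    ring
  rw [final]
  exact key

end Stmt18Aux

/-- For the quadratic potential `Ω(x) = Σ ω_j² x_j²`, every Schwartz
function `u` satisfies `2 Re ∫ Δu conj(Ω u) ≤ 2 (Σ ω_j²) ∫ |u|²`. -/
theorem stmt18 (d : ℕ) (hd : 1 ≤ d) (ω : Fin d → ℝ)
    (u : SchwartzMap (EuclideanSpace ℝ (Fin d)) ℂ) :
    2 * (∫ x, laplacian (⇑u) x *
          (starRingEnd ℂ) (((∑ j, ω j ^ 2 * x j ^ 2 : ℝ) : ℂ) * u x)).re ≤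
      2 * (∑ j, ω j ^ 2) * ∫ x, ‖u x‖ ^ 2 := by
  classical
  open SchwartzMap Stmt18Aux in
  -- abbreviations
  set U2 : Fin d → 𝓢(EuclideanSpace ℝ (Fin d), ℂ) := fun j =>
    pderivCLM ℝ (EuclideanSpace.single j 1)
      (pderivCLM ℝ (EuclideanSpace.single j 1) u) with hU2def
  have hS0 : (0:ℝ) ≤ ∑ k, ω k ^ 2 := Finset.sum_nonneg fun k _ => sq_nonneg _
  -- the Laplacian is the sum of the U2 j
  have hlap : ∀ x, laplacian (⇑u) x = ∑ j, U2 j x := by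
    intro x
    rw [laplacian]
    refine Finset.sum_congr rfl fun j _ => ?_
    rw [hU2def]
    rw [pderivCLM_apply]
    have : (fun y => fderiv ℝ (⇑u) y (EuclideanSpace.single j 1))
        = ⇑((pderivCLM ℝ (EuclideanSpace.single j 1)) u) := by
      funext y
      rw [pderivCLM_apply]
    rw [this]
  -- integrand rewrite
  have hfun : (fun x : EuclideanSpace ℝ (Fin d) => laplacian (⇑u) x *
        (starRingEnd ℂ) (((∑ j, ω j ^ 2 * x j ^ 2 : ℝ) : ℂ) * u x))
      = fun x : EuclideanSpace ℝ (Fin d) =>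
          ∑ j, (U2 j x * (starRingEnd ℂ) (((∑ k, ω k ^ 2 * x k ^ 2 : ℝ) : ℂ) * u x)) := by
    funext x
    rw [hlap x, Finset.sum_mul]
  -- integrability of each complex summand
  have hintj : ∀ j : Fin d, Integrable (fun x : EuclideanSpace ℝ (Fin d) =>
      U2 j x * (starRingEnd ℂ) (((∑ k, ω k ^ 2 * x k ^ 2 : ℝ) : ℂ) * u x)) volume := by
    intro j
    refine integrable_of_bound (U2 j) u 2 (∑ k, ω k ^ 2) hS0 _ ?_ fun x => ?_
    · exact (U2 j).continuous.mul (Complex.continuous_conj.comp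
        ((Complex.continuous_ofReal.comp
          (omega_diff (d := d) ω).continuous).mul u.continuous))
    · rw [norm_mul, RCLike.norm_conj, norm_mul, Complex.norm_real, Real.norm_eq_abs]
      have h1 := omega_abs_le ω x
      calc ‖U2 j x‖ * (|∑ k, ω k ^ 2 * x k ^ 2| * ‖u x‖)
          ≤ ‖U2 j x‖ * (((∑ k, ω k ^ 2) * ‖x‖ ^ 2) * ‖u x‖) := by
            apply mul_le_mul_of_nonneg_left _ (norm_nonneg _)
            exact mul_le_mul_of_nonneg_right h1 (norm_nonneg _)
        _ = (∑ k, ω k ^ 2) * (‖x‖ ^ 2 * (‖U2 j x‖ * ‖u x‖)) := by ring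
  have hFint : Integrable (fun x : EuclideanSpace ℝ (Fin d) =>
      ∑ j, (U2 j x * (starRingEnd ℂ) (((∑ k, ω k ^ 2 * x k ^ 2 : ℝ) : ℂ) * u x))) volume :=
    integrable_finset_sum _ fun j _ => hintj j
  -- take real parts inside
  rw [hfun]
  have hre := Complex.reCLM.integral_comp_comm hFint
  simp only [Complex.reCLM_apply] at hre
  rw [← hre]
  -- pointwise: real part of each summand
  have hptwise : ∀ x : EuclideanSpace ℝ (Fin d),
      (∑ j, (U2 j x * (starRingEnd ℂ) (((∑ k, ω k ^ 2 * x k ^ 2 : ℝ) : ℂ) * u x))).re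
      = ∑ j, (∑ k, ω k ^ 2 * x k ^ 2) * (U2 j x * (starRingEnd ℂ) (u x)).re := by
    intro x
    rw [Complex.re_sum]
    refine Finset.sum_congr rfl fun j _ => ?_
    rw [map_mul, Complex.conj_ofReal]
    have : U2 j x * ((((∑ k, ω k ^ 2 * x k ^ 2 : ℝ)) : ℂ) * (starRingEnd ℂ) (u x))
        = (((∑ k, ω k ^ 2 * x k ^ 2 : ℝ)) : ℂ) * (U2 j x * (starRingEnd ℂ) (u x)) := by
      ring
    rw [this, Complex.re_ofReal_mul]
  have hGint : ∀ j : Fin d, Integrable (fun x : EuclideanSpace ℝ (Fin d) =>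
      (∑ k, ω k ^ 2 * x k ^ 2) * (U2 j x * (starRingEnd ℂ) (u x)).re) volume := by
    intro j
    refine integrable_of_bound (U2 j) u 2 (∑ k, ω k ^ 2) hS0 _
      ((omega_diff (d := d) ω).continuous.mul (key_diff (U2 j) u).continuous) fun x => ?_
    have h1 := omega_abs_le ω x
    have h2 := re_mul_conj_abs_le (U2 j x) (u x)
    rw [Real.norm_eq_abs, abs_mul]
    calc |∑ k, ω k ^ 2 * x k ^ 2| * |(U2 j x * (starRingEnd ℂ) (u x)).re|
        ≤ ((∑ k, ω k ^ 2) * ‖x‖ ^ 2) * (‖U2 j x‖ * ‖u x‖) :=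
          mul_le_mul h1 h2 (abs_nonneg _) (by positivity)
      _ = (∑ k, ω k ^ 2) * (‖x‖ ^ 2 * (‖U2 j x‖ * ‖u x‖)) := by ring
  have hsplit : ∫ x : EuclideanSpace ℝ (Fin d),
      (∑ j, (U2 j x * (starRingEnd ℂ) (((∑ k, ω k ^ 2 * x k ^ 2 : ℝ) : ℂ) * u x))).re
      = ∑ j, ∫ x : EuclideanSpace ℝ (Fin d),
          (∑ k, ω k ^ 2 * x k ^ 2) * (U2 j x * (starRingEnd ℂ) (u x)).re := by
    rw [integral_congr_ae (Filter.Eventually.of_forall hptwise)]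
    exact integral_finset_sum _ fun j _ => hGint j
  rw [hsplit, Finset.mul_sum]
  have hbound : ∀ j : Fin d,
      2 * ∫ x : EuclideanSpace ℝ (Fin d),
        (∑ k, ω k ^ 2 * x k ^ 2) * (U2 j x * (starRingEnd ℂ) (u x)).re
      ≤ 2 * ω j ^ 2 * ∫ x : EuclideanSpace ℝ (Fin d), ‖u x‖ ^ 2 :=
    fun j => per_coord ω u j
  calc ∑ j, 2 * ∫ x : EuclideanSpace ℝ (Fin d),
        (∑ k, ω k ^ 2 * x k ^ 2) * (U2 j x * (starRingEnd ℂ) (u x)).re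
      ≤ ∑ j, 2 * ω j ^ 2 * ∫ x : EuclideanSpace ℝ (Fin d), ‖u x‖ ^ 2 :=
        Finset.sum_le_sum fun j _ => hbound j
    _ = 2 * (∑ j, ω j ^ 2) * ∫ x : EuclideanSpace ℝ (Fin d), ‖u x‖ ^ 2 := by
        rw [← Finset.sum_mul, ← Finset.mul_sum]
end
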